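/- arXiv:1202.0986 — 5 statements merged into one kernel-verified Lean document; each statement's English description precedes it below -/
import Mathlib

section
/- There exists an absolute constant K > 0 such that for every integer m ≥ 2 there is a single m×m diagonal matrix B, with all diagonal entries in the square Q, with the following property: for every m×m complex matrix A all of whose diagonal entries are zero, there exists an m×m complex matrix C with A = BC − CB and ‖C‖ ≤ K · (log m)³ · √m · ‖A‖. (The matrix B depends only on m, not on A.) -/
noncomputable def opNorm {ι κ : Type*} [Fintype ι] [Fintype κ] [DecidableEq κ]
    (A : Matrix ι κ ℂ) : ℝ :=
  ‖LinearMap.toContinuousLinearMap (Matrix.toEuclideanLin A)‖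

def Qsq : Set ℂ := {z : ℂ | |z.re| ≤ 1 ∧ |z.im| ≤ 1}

open Matrix MeasureTheory Complex intervalIntegral

namespace Stmt3Aux

/-! ### Operator norm infrastructure -/

variable {m : ℕ}

noncomputable def Phi (M : Matrix (Fin m) (Fin m) ℂ) :
    EuclideanSpace ℂ (Fin m) →L[ℂ] EuclideanSpace ℂ (Fin m) :=
  Matrix.toEuclideanCLM (𝕜 := ℂ) M

lemma opNorm_eq_Phi (M : Matrix (Fin m) (Fin m) ℂ) : opNorm M = ‖Phi M‖ := rfl

lemma Phi_apply (M : Matrix (Fin m) (Fin m) ℂ) (x : EuclideanSpace ℂ (Fin m)) (i : Fin m) :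
    (Phi M x) i = ∑ j, M i j * x j := rfl

lemma Phi_sum {α : Type*} (s : Finset α) (f : α → Matrix (Fin m) (Fin m) ℂ) :
    Phi (∑ a ∈ s, f a) = ∑ a ∈ s, Phi (f a) := map_sum _ _ _

lemma Phi_smul (c : ℂ) (M : Matrix (Fin m) (Fin m) ℂ) : Phi (c • M) = c • Phi M :=
  map_smul (Matrix.toEuclideanCLM (𝕜 := ℂ) (n := Fin m)) c M

lemma Phi_mul (M N : Matrix (Fin m) (Fin m) ℂ) : Phi (M * N) = (Phi M).comp (Phi N) :=
  map_mul (Matrix.toEuclideanCLM (𝕜 := ℂ) (n := Fin m)) M N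

lemma Phi_diag_le (w : Fin m → ℂ) (hw : ∀ i, ‖w i‖ ≤ 1) : ‖Phi (Matrix.diagonal w)‖ ≤ 1 := by
  refine ContinuousLinearMap.opNorm_le_bound _ zero_le_one fun x => ?_
  rw [one_mul]
  have hx : ∀ y : EuclideanSpace ℂ (Fin m), ‖y‖ = Real.sqrt (∑ i, ‖y i‖ ^ 2) :=
    fun y => EuclideanSpace.norm_eq y
  rw [hx, hx]
  apply Real.sqrt_le_sqrt
  apply Finset.sum_le_sum
  intro i _
  have : (Phi (Matrix.diagonal w) x) i = w i * x i := by
    rw [Phi_apply]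
    simp [Matrix.diagonal, Finset.sum_ite_eq]
  rw [this, norm_mul]
  calc (‖w i‖ * ‖x i‖) ^ 2 ≤ (1 * ‖x i‖) ^ 2 := by
        gcongr
        exact hw i
    _ = ‖x i‖ ^ 2 := by ring

lemma Phi_conj_le (u v : Fin m → ℂ) (A : Matrix (Fin m) (Fin m) ℂ)
    (hu : ∀ i, ‖u i‖ ≤ 1) (hv : ∀ i, ‖v i‖ ≤ 1) :
    ‖Phi (Matrix.diagonal u * A * Matrix.diagonal v)‖ ≤ ‖Phi A‖ := by
  rw [Phi_mul, Phi_mul]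
  calc ‖((Phi (diagonal u)).comp (Phi A)).comp (Phi (diagonal v))‖
      ≤ ‖(Phi (diagonal u)).comp (Phi A)‖ * ‖Phi (diagonal v)‖ :=
        ContinuousLinearMap.opNorm_comp_le _ _
    _ ≤ ‖Phi (diagonal u)‖ * ‖Phi A‖ * ‖Phi (diagonal v)‖ := by
        have := ContinuousLinearMap.opNorm_comp_le (Phi (diagonal u)) (Phi A)
        have h2 : (0:ℝ) ≤ ‖Phi (diagonal v)‖ := norm_nonneg _
        nlinarith
    _ ≤ 1 * ‖Phi A‖ * 1 := by
        gcongr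
        · exact Phi_diag_le u hu
        · exact Phi_diag_le v hv
    _ = ‖Phi A‖ := by ring

noncomputable def PhiL : Matrix (Fin m) (Fin m) ℂ →ₗ[ℂ]
    (EuclideanSpace ℂ (Fin m) →L[ℂ] EuclideanSpace ℂ (Fin m)) where
  toFun := Phi
  map_add' _ _ := map_add _ _ _
  map_smul' c M := map_smul (Matrix.toEuclideanCLM (𝕜 := ℂ) (n := Fin m)) c M

lemma Phi_continuous : Continuous (Phi (m := m)) :=
  (PhiL (m := m)).continuous_of_finiteDimensional

/-! ### The key integral bound -/

lemma key (G : ℝ → Matrix (Fin m) (Fin m) ℂ) (hG : Continuous G)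
    (C' : Matrix (Fin m) (Fin m) ℂ)
    (hC' : ∀ i j, C' i j = ∫ θ in (0:ℝ)..(2*Real.pi), G θ i j)
    (g : ℝ → ℝ) (hg : Continuous g)
    (hb : ∀ θ ∈ Set.Icc (0:ℝ) (2*Real.pi), ‖Phi (G θ)‖ ≤ g θ) :
    ‖Phi C'‖ ≤ ∫ θ in (0:ℝ)..(2*Real.pi), g θ := by
  have hπ : (0:ℝ) ≤ 2*Real.pi := by positivity
  have hF : Continuous fun θ => Phi (G θ) := Phi_continuous.comp hG
  have hFi : IntegrableOn (fun θ => Phi (G θ)) (Set.Ioc 0 (2*Real.pi)) volume :=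
    hF.integrableOn_Ioc
  have heq : Phi C' = ∫ θ in (0:ℝ)..(2*Real.pi), Phi (G θ) := by
    rw [intervalIntegral.integral_of_le hπ]
    ext x i
    have hFx : Continuous fun θ => Phi (G θ) x :=
      (ContinuousLinearMap.apply ℂ _ x).continuous.comp hF
    rw [ContinuousLinearMap.integral_apply hFi]
    have hproj : (∫ θ in Set.Ioc (0:ℝ) (2*Real.pi), Phi (G θ) x) i
        = ∫ θ in Set.Ioc (0:ℝ) (2*Real.pi), (Phi (G θ) x) i :=
      ((EuclideanSpace.proj i : EuclideanSpace ℂ (Fin m) →L[ℂ] ℂ).integral_comp_comm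
        hFx.integrableOn_Ioc).symm
    rw [hproj]
    have hPa : ∀ θ : ℝ, (Phi (G θ) x) i = ∑ j, G θ i j * x j := fun θ => Phi_apply _ _ _
    simp only [hPa]
    have hint : ∀ j : Fin m, IntegrableOn (fun θ => G θ i j * x j)
        (Set.Ioc 0 (2*Real.pi)) volume := by
      intro j
      refine Continuous.integrableOn_Ioc ?_
      exact (((continuous_apply j).comp ((continuous_apply i).comp hG)).mul continuous_const)
    rw [MeasureTheory.integral_finset_sum _ (fun j _ => hint j)]
    have h1 : ∀ j : Fin m, ∫ θ in Set.Ioc (0:ℝ) (2*Real.pi), G θ i j * x j =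
        (∫ θ in Set.Ioc (0:ℝ) (2*Real.pi), G θ i j) * x j := fun j =>
      MeasureTheory.integral_mul_const _ _
    simp only [h1]
    have h2 : ∀ j : Fin m, ∫ θ in Set.Ioc (0:ℝ) (2*Real.pi), G θ i j = C' i j := by
      intro j
      rw [hC' i j, intervalIntegral.integral_of_le hπ]
    simp only [h2]
    exact (Phi_apply C' x i).symm
  rw [heq]
  refine (intervalIntegral.norm_integral_le_integral_norm hπ).trans ?_
  exact intervalIntegral.integral_mono_on hπ (hF.norm.intervalIntegrable _ _)
    (hg.intervalIntegrable _ _) hb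

/-! ### Scalar weight functions -/

noncomputable def psi (k : ℤ) (θ : ℝ) : ℝ :=
  if k = 0 then 1/2 - θ/(2*Real.pi)
  else Real.exp (-(k:ℝ)*θ) / (1 - Real.exp (-(2*Real.pi*k)))

lemma psi_continuous (k : ℤ) : Continuous (psi k) := by
  unfold psi; split <;> fun_prop

lemma hasDerivAt_cexp_real (c : ℂ) (x : ℝ) :
    HasDerivAt (fun y : ℝ => Complex.exp (c*y)) (c * Complex.exp (c*x)) x := by
  have h1 : HasDerivAt (fun y : ℝ => c * (y:ℂ)) c x := by
    simpa only [mul_one, id_eq] using ((hasDerivAt_id (x : ℂ)).const_mul c).comp_ofReal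
  simpa [mul_comm, Function.comp_def] using (Complex.hasDerivAt_exp (c*x)).comp x h1

lemma integral_mul_cexp (c : ℂ) (hc : c ≠ 0) :
    ∫ θ in (0:ℝ)..(2*Real.pi), (θ:ℂ) * Complex.exp (c*θ)
      = ((2*Real.pi)/c - 1/c^2) * Complex.exp (c*(2*Real.pi)) + 1/c^2 := by
  have hH : ∀ x : ℝ, HasDerivAt (fun y : ℝ => ((y:ℂ)/c - 1/c^2) * Complex.exp (c*y))
      ((x:ℂ) * Complex.exp (c*x)) x := by
    intro x
    have hlin : HasDerivAt (fun y : ℝ => ((y:ℂ)/c - 1/c^2)) (1/c) x := by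
      have := ((hasDerivAt_id (x:ℂ)).comp_ofReal.div_const c).sub_const (1/c^2)
      simpa [one_div] using this
    have := hlin.mul (hasDerivAt_cexp_real c x)
    refine this.congr_deriv ?_
    field_simp
    ring
  rw [integral_eq_sub_of_hasDerivAt (fun x _ => hH x)
    (by apply Continuous.intervalIntegrable; fun_prop)]
  push_cast
  field_simp
  simp only [mul_zero, Complex.exp_zero]
  ring

lemma exp_int_two_pi (l : ℤ) : Complex.exp (-(l:ℂ) * (2*Real.pi) * I) = 1 := by
  have := Complex.exp_int_mul_two_pi_mul_I (-l)
  convert this using 2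
  push_cast
  ring

lemma psi_int (k l : ℤ) (h : ¬(k = 0 ∧ l = 0)) :
    ∫ θ in (0:ℝ)..(2*Real.pi), (psi k θ : ℂ) * Complex.exp (-(l:ℂ) * θ * I)
      = 1/((k:ℂ) + l*I) := by
  rcases eq_or_ne k 0 with hk | hk
  · subst hk
    have hl : l ≠ 0 := by tauto
    have hc : (-(l:ℂ)*I) ≠ 0 := by
      simp [I_ne_zero]
      exact_mod_cast hl
    have hπ : (Real.pi : ℂ) ≠ 0 := by exact_mod_cast Real.pi_ne_zero
    have hsplit : ∀ θ : ℝ, (psi 0 θ : ℂ) * Complex.exp (-(l:ℂ) * θ * I)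
        = (1/2 : ℂ) * Complex.exp ((-(l:ℂ)*I)*θ)
          - (1/(2*(Real.pi:ℂ))) * ((θ:ℂ) * Complex.exp ((-(l:ℂ)*I)*θ)) := by
      intro θ
      simp only [psi, reduceIte]
      push_cast
      field_simp
    rw [intervalIntegral.integral_congr (g := fun θ : ℝ =>
      (1/2 : ℂ) * Complex.exp ((-(l:ℂ)*I)*θ)
        - (1/(2*(Real.pi:ℂ))) * ((θ:ℂ) * Complex.exp ((-(l:ℂ)*I)*θ)))
      (fun θ _ => hsplit θ)]
    rw [intervalIntegral.integral_sub (by apply Continuous.intervalIntegrable; fun_prop)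
      (by apply Continuous.intervalIntegrable; fun_prop),
      intervalIntegral.integral_const_mul, intervalIntegral.integral_const_mul,
      integral_exp_mul_complex hc, integral_mul_cexp _ hc]
    have h2 : Complex.exp (-(l:ℂ)*I*((2*Real.pi:ℝ):ℂ)) = 1 := by
      have h3 := exp_int_two_pi l
      convert h3 using 2
      push_cast
      ring
    have h2' : Complex.exp (-(l:ℂ)*I*(2*(Real.pi:ℂ))) = 1 := by
      convert h2 using 2
      push_cast
      ring
    rw [h2, h2', show ((0:ℝ):ℂ) = 0 from rfl, mul_zero, Complex.exp_zero]
    field_simp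
    push_cast
    ring
  · have hkC : ((k:ℂ) + l*I) ≠ 0 := by
      intro hh
      apply hk
      have := congrArg Complex.re hh
      simpa using this
    have hc : -((k:ℂ) + l*I) ≠ 0 := neg_ne_zero.mpr hkC
    have hD : (1 - Real.exp (-(2*Real.pi*k))) ≠ 0 := by
      intro hh
      have h1 : Real.exp (-(2*Real.pi*k)) = 1 := by linarith
      rw [Real.exp_eq_one_iff] at h1
      have hπ := Real.pi_ne_zero
      have hk0 : (k:ℝ) = 0 := by
        have h2 : 2*Real.pi*(k:ℝ) = 0 := by linarith
        rcases mul_eq_zero.mp h2 with h3 | h3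
        · nlinarith [Real.pi_pos]
        · exact h3
      exact hk (by exact_mod_cast hk0)
    have hrw : ∀ θ : ℝ, (psi k θ : ℂ) * Complex.exp (-(l:ℂ) * θ * I)
        = Complex.exp (-((k:ℂ) + l*I)*θ) / ((1 - Real.exp (-(2*Real.pi*k)) : ℝ) : ℂ) := by
      intro θ
      simp only [psi, if_neg hk]
      rw [Complex.ofReal_div, div_mul_eq_mul_div]
      congr 1
      rw [Complex.ofReal_exp, ← Complex.exp_add]
      congr 1
      push_cast
      ring
    rw [intervalIntegral.integral_congr (g := fun θ : ℝ =>
        Complex.exp (-((k:ℂ) + l*I)*θ) / ((1 - Real.exp (-(2*Real.pi*k)) : ℝ) : ℂ))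
      (fun θ _ => hrw θ)]
    rw [intervalIntegral.integral_div, integral_exp_mul_complex hc]
    have h2 : Complex.exp (-((k:ℂ) + l*I)*((2*Real.pi:ℝ):ℂ))
        = ((Real.exp (-(2*Real.pi*k)) : ℝ) : ℂ) := by
      rw [Complex.ofReal_exp]
      rw [show (-((k:ℂ) + l*I) * ((2*Real.pi:ℝ):ℂ)) = ((-(2*Real.pi*k) : ℝ) : ℂ)
          + (-(l:ℂ)) * (2*Real.pi) * I by push_cast; ring]
      rw [Complex.exp_add, exp_int_two_pi]
      ring
    have hDC : ((1 - Real.exp (-(2*Real.pi*k)) : ℝ) : ℂ) ≠ 0 := by exact_mod_cast hD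
    rw [show ((0:ℝ):ℂ) = 0 from rfl, mul_zero, Complex.exp_zero, h2]
    have key : ((Real.exp (-(2*Real.pi*k)) :ℝ):ℂ) - 1
        = -((1 - Real.exp (-(2*Real.pi*k)) : ℝ):ℂ) := by push_cast; ring
    rw [key]
    set a : ℂ := ((1 - Real.exp (-(2*Real.pi*k)) : ℝ):ℂ) with ha
    rw [div_div, mul_comm, neg_div, div_mul_cancel_left₀ hDC]
    rw [show -(↑k + (l:ℂ) * I) = (-1) * ((k:ℂ) + l*I) by ring, mul_inv]
    norm_num

lemma integral_exp_real (a : ℝ) (ha : a ≠ 0) :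
    ∫ θ in (0:ℝ)..(2*Real.pi), Real.exp (a*θ) = (Real.exp (a*(2*Real.pi)) - 1)/a := by
  have hH : ∀ x : ℝ, HasDerivAt (fun y : ℝ => Real.exp (a*y)/a) (Real.exp (a*x)) x := by
    intro x
    have h1 : HasDerivAt (fun y : ℝ => a*y) a x := by
      simpa using (hasDerivAt_id x).const_mul a
    have h2 := ((Real.hasDerivAt_exp (a*x)).comp x h1).div_const a
    refine h2.congr_deriv ?_
    field_simp
  rw [integral_eq_sub_of_hasDerivAt (fun x _ => hH x)
    (by apply Continuous.intervalIntegrable; fun_prop)]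
  rw [mul_zero, Real.exp_zero]
  ring

lemma psi_abs_integral (k : ℤ) :
    ∫ θ in (0:ℝ)..(2*Real.pi), |psi k θ| ≤ (if k = 0 then Real.pi else 1/|(k:ℝ)|) := by
  have hπ : (0:ℝ) ≤ 2*Real.pi := by positivity
  rcases eq_or_ne k 0 with hk | hk
  · subst hk
    rw [if_pos rfl]
    have hb : ∀ θ ∈ Set.Icc (0:ℝ) (2*Real.pi), |psi 0 θ| ≤ 1/2 := by
      intro θ hθ
      have hπ' := Real.pi_pos
      simp only [psi, reduceIte]
      rw [abs_le]
      constructor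
      · have : θ/(2*Real.pi) ≤ 1 := by
          rw [div_le_one Real.two_pi_pos]
          exact hθ.2
        linarith
      · have : 0 ≤ θ/(2*Real.pi) := div_nonneg hθ.1 (le_of_lt Real.two_pi_pos)
        linarith
    calc ∫ θ in (0:ℝ)..(2*Real.pi), |psi 0 θ|
        ≤ ∫ _ in (0:ℝ)..(2*Real.pi), (1/2 : ℝ) := by
          exact intervalIntegral.integral_mono_on hπ
            ((psi_continuous 0).abs.intervalIntegrable _ _)
            (intervalIntegrable_const) hb
      _ = Real.pi := by
          rw [intervalIntegral.integral_const]
          simp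
          ring
  · simp only [if_neg hk]
    have hkR : ((k:ℝ)) ≠ 0 := by exact_mod_cast hk
    set E := Real.exp (-(2*Real.pi*k)) with hE
    have hD : (1 - E) ≠ 0 := by
      intro hh
      have h1 : E = 1 := by linarith
      rw [hE, Real.exp_eq_one_iff] at h1
      have : 2*Real.pi*(k:ℝ) = 0 := by linarith
      rcases mul_eq_zero.mp this with h3 | h3
      · nlinarith [Real.pi_pos]
      · exact hkR h3
    have habs : ∀ θ : ℝ, |psi k θ| = Real.exp (-(k:ℝ)*θ) / |1 - E| := by
      intro θ
      simp only [psi, if_neg hk, ← hE]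
      rw [abs_div, abs_of_pos (Real.exp_pos _)]
    rw [intervalIntegral.integral_congr (g := fun θ => Real.exp (-(k:ℝ)*θ) / |1 - E|)
      (fun θ _ => habs θ)]
    rw [intervalIntegral.integral_div, integral_exp_real _ (neg_ne_zero.mpr hkR)]
    have hexp : Real.exp (-(k:ℝ)*(2*Real.pi)) = E := by rw [hE]; ring_nf
    rw [hexp]
    have hdiv : ∀ x y : ℝ, x ≠ 0 → x/y/x = 1/y := by
      intro x y hx
      rw [div_div, mul_comm, div_mul_cancel_left₀ hx, one_div]
    rcases lt_or_gt_of_ne hk with hneg | hpos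
    · have hkR' : (k:ℝ) < 0 := by exact_mod_cast hneg
      have hE1 : 1 < E := by
        rw [hE]
        rw [Real.one_lt_exp_iff]
        nlinarith [Real.pi_pos]
      rw [abs_of_neg (by linarith : 1 - E < 0), abs_of_neg hkR']
      apply le_of_eq
      have hE1' : E - 1 ≠ 0 := by linarith
      field_simp
      ring
    · have hkR' : (0:ℝ) < (k:ℝ) := by exact_mod_cast hpos
      have hE1 : E < 1 := by
        rw [hE, Real.exp_lt_one_iff]
        nlinarith [Real.pi_pos]
      rw [abs_of_pos (by linarith : (0:ℝ) < 1 - E), abs_of_pos hkR']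
      apply le_of_eq
      field_simp
      ring

/-! ### Root of unity sums -/

lemma zeta_sum (Nn : ℕ) (hN : Nn ≠ 0) (d : ℤ) (hd : d ≠ 0) (hlt : d.natAbs < Nn) :
    ∑ s ∈ Finset.range Nn, (Complex.exp (2*Real.pi*I/Nn)) ^ (d * s) = 0 := by
  set ζ : ℂ := Complex.exp (2*Real.pi*I/Nn) with hζdef
  have hNC : (Nn:ℂ) ≠ 0 := by exact_mod_cast hN
  have hζN : ζ ^ (Nn:ℤ) = 1 := by
    rw [hζdef, ← Complex.exp_int_mul]
    rw [show ((Nn:ℤ):ℂ) * (2*Real.pi*I/Nn) = ((1:ℤ):ℂ) * (2*Real.pi*I) by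
      push_cast; field_simp]
    exact Complex.exp_int_mul_two_pi_mul_I 1
  have hx : ζ ^ d ≠ 1 := by
    intro hh
    rw [hζdef, ← Complex.exp_int_mul] at hh
    rw [Complex.exp_eq_one_iff] at hh
    obtain ⟨t, ht⟩ := hh
    have hπI : (2*(Real.pi:ℂ)*I) ≠ 0 := by
      simp [Complex.I_ne_zero, Complex.ofReal_ne_zero, Real.pi_ne_zero]
    have hdt : (d:ℂ) = t * Nn := by
      have h1 : (d:ℂ) * (2*Real.pi*I) = (t * Nn) * (2*Real.pi*I) := by
        have h0 := congrArg (fun z : ℂ => z * Nn) ht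
        field_simp at h0
        linear_combination (2*(Real.pi:ℂ)*I) * h0
      exact mul_right_cancel₀ hπI h1
    have : d = t * Nn := by exact_mod_cast hdt
    rcases eq_or_ne t 0 with rfl | ht0
    · simp at this; exact hd this
    · have : Nn ≤ d.natAbs := by
        rw [this]
        calc Nn = 1 * Nn := (one_mul _).symm
        _ ≤ t.natAbs * Nn := by
            apply Nat.mul_le_mul_right
            omega
        _ = (t * Nn).natAbs := by rw [Int.natAbs_mul]; simp
      omega
  have hsum : ∀ s ∈ Finset.range Nn, ζ ^ (d * s) = (ζ^d)^s := by
    intro s _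
    rw [_root_.zpow_mul, zpow_natCast]
  rw [Finset.sum_congr rfl hsum, geom_sum_eq hx]
  have : (ζ^d)^Nn = 1 := by
    rw [← zpow_natCast, ← _root_.zpow_mul, mul_comm, _root_.zpow_mul, hζN, _root_.one_zpow]
  rw [this]
  simp

/-! ### Harmonic-type bound -/

lemma wsum_bound : ∀ M : ℕ, 1 ≤ M →
    ∑ k ∈ Finset.Icc (-(M:ℤ)) (M:ℤ), (if k = 0 then Real.pi else 1/|(k:ℝ)|)
      ≤ Real.pi + 2 + 2*Real.log M := by
  intro M
  induction M with
  | zero => omega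
  | succ M ih =>
    intro _
    rcases Nat.eq_or_lt_of_le (Nat.one_le_iff_ne_zero.mpr (Nat.succ_ne_zero M)) with h1 | h1
    · -- M + 1 = 1
      have hM0 : M = 0 := by omega
      subst hM0
      have hset : Finset.Icc (-((0+1:ℕ):ℤ)) ((0+1:ℕ):ℤ) = {-1, 0, 1} := by
        ext x
        simp only [Finset.mem_Icc, Finset.mem_insert, Finset.mem_singleton]
        omega
      rw [hset, Finset.sum_insert (by decide), Finset.sum_insert (by decide),
        Finset.sum_singleton]
      norm_num
      linarith [Real.pi_pos]
    · have hM1 : 1 ≤ M := by omega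
      have hstep := ih hM1
      have hset : Finset.Icc (-((M+1:ℕ):ℤ)) ((M+1:ℕ):ℤ)
          = insert (-((M+1:ℕ):ℤ)) (insert ((M+1:ℕ):ℤ) (Finset.Icc (-(M:ℤ)) (M:ℤ))) := by
        ext x
        simp only [Finset.mem_Icc, Finset.mem_insert]
        push_cast
        omega
      rw [hset]
      rw [Finset.sum_insert (by
        simp only [Finset.mem_insert, Finset.mem_Icc]
        push_cast
        omega)]
      rw [Finset.sum_insert (by
        simp only [Finset.mem_Icc]
        push_cast
        omega)]
      have hne1 : (-((M+1:ℕ):ℤ)) ≠ 0 := by push_cast; omega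
      have hne2 : ((M+1:ℕ):ℤ) ≠ 0 := by push_cast; omega
      rw [if_neg hne1, if_neg hne2]
      have hMpos : (0:ℝ) < M := by exact_mod_cast hM1
      push_cast
      rw [abs_neg, abs_of_pos (by linarith : (0:ℝ) < (M:ℝ)+1)]
      have hlog : Real.log M + 1/((M:ℝ)+1) ≤ Real.log ((M:ℝ)+1) := by
        have hq : (0:ℝ) < (M:ℝ)/((M:ℝ)+1) := by positivity
        have h := Real.log_le_sub_one_of_pos hq
        rw [Real.log_div (ne_of_gt hMpos) (by linarith)] at h
        have heq : (M:ℝ)/((M:ℝ)+1) - 1 = -(1/((M:ℝ)+1)) := by field_simp; ring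
        rw [heq] at h
        linarith
      linarith

/-! ### The construction -/

def Pc (n : ℕ) (i : Fin m) : ℤ := ((i:ℕ)/n : ℕ)
def Bc (n : ℕ) (i : Fin m) : ℤ := ((i:ℕ)%n : ℕ)

noncomputable def dd (n : ℕ) (i : Fin m) : ℂ :=
  (((Pc n i : ℝ)/n : ℝ) : ℂ) + (((Bc n i : ℝ)/n : ℝ) : ℂ) * I

noncomputable def zeta (n : ℕ) : ℂ := Complex.exp (2*Real.pi*I/((2*n : ℕ):ℂ))

noncomputable def uu (n : ℕ) (s : ℕ) (θ : ℝ) (i : Fin m) : ℂ :=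
  zeta n ^ (Pc n i * s) * Complex.exp (-(Bc n i : ℂ) * θ * I)

noncomputable def vv (n : ℕ) (s : ℕ) (θ : ℝ) (j : Fin m) : ℂ :=
  zeta n ^ (-(Pc n j) * s) * Complex.exp ((Bc n j : ℂ) * θ * I)

noncomputable def CC (n : ℕ) (A : Matrix (Fin m) (Fin m) ℂ) : Matrix (Fin m) (Fin m) ℂ :=
  Matrix.of fun i j => if i = j then 0 else A i j / (dd n i - dd n j)

noncomputable def CCk (n : ℕ) (A : Matrix (Fin m) (Fin m) ℂ) (k : ℤ) :
    Matrix (Fin m) (Fin m) ℂ :=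
  Matrix.of fun i j => if Pc n i - Pc n j = k then CC n A i j else 0

noncomputable def GG (n : ℕ) (A : Matrix (Fin m) (Fin m) ℂ) (k : ℤ) (θ : ℝ) :
    Matrix (Fin m) (Fin m) ℂ :=
  ((n:ℂ) * (psi k θ : ℂ) / ((2*n : ℕ):ℂ)) •
    ∑ s ∈ Finset.range (2*n), zeta n ^ (-k * (s:ℤ)) •
      (Matrix.diagonal (uu n s θ) * A * Matrix.diagonal (vv n s θ))

lemma zeta_ne_zero (n : ℕ) : zeta n ≠ 0 := Complex.exp_ne_zero _

lemma zeta_norm (n : ℕ) (hn : n ≠ 0) : ‖zeta n‖ = 1 := by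
  unfold zeta
  have h1 : (2*Real.pi*I/((2*n : ℕ):ℂ)) = ((2*Real.pi/((2*n:ℕ)) : ℝ):ℂ) * I := by
    push_cast
    have : ((n:ℂ)) ≠ 0 := by exact_mod_cast hn
    field_simp
  rw [h1]
  exact Complex.norm_exp_ofReal_mul_I _

lemma uu_norm (n : ℕ) (hn : n ≠ 0) (s : ℕ) (θ : ℝ) (i : Fin m) : ‖uu n s θ i‖ = 1 := by
  unfold uu
  rw [norm_mul, norm_zpow, zeta_norm n hn, _root_.one_zpow]
  rw [show (-(Bc n i : ℂ) * θ * I) = (((-(Bc n i : ℝ) * θ : ℝ)):ℂ) * I by push_cast; ring]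
  rw [Complex.norm_exp_ofReal_mul_I]
  norm_num

lemma vv_norm (n : ℕ) (hn : n ≠ 0) (s : ℕ) (θ : ℝ) (j : Fin m) : ‖vv n s θ j‖ = 1 := by
  unfold vv
  rw [norm_mul, norm_zpow, zeta_norm n hn, _root_.one_zpow]
  rw [show ((Bc n j : ℂ) * θ * I) = ((((Bc n j : ℝ) * θ : ℝ)):ℂ) * I by push_cast; ring]
  rw [Complex.norm_exp_ofReal_mul_I]
  norm_num

lemma GG_apply (n : ℕ) (A : Matrix (Fin m) (Fin m) ℂ) (k : ℤ) (θ : ℝ) (i j : Fin m) :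
    GG n A k θ i j
      = ((n:ℂ)/((2*n:ℕ):ℂ) * (∑ s ∈ Finset.range (2*n),
            zeta n ^ ((Pc n i - Pc n j - k) * (s:ℤ))) * A i j)
        * ((psi k θ : ℂ) * Complex.exp (-((Bc n i - Bc n j : ℤ):ℂ) * θ * I)) := by
  unfold GG
  rw [Matrix.smul_apply, Matrix.sum_apply]
  have hz := zeta_ne_zero n
  have hterm : ∀ s : ℕ, ((zeta n ^ (-k * (s:ℤ)) •
      (Matrix.diagonal (uu n s θ) * A * Matrix.diagonal (vv n s θ))
        : Matrix (Fin m) (Fin m) ℂ)) i j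
      = zeta n ^ ((Pc n i - Pc n j - k) * (s:ℤ))
        * (A i j * Complex.exp (-((Bc n i - Bc n j : ℤ):ℂ) * θ * I)) := by
    intro s
    rw [Matrix.smul_apply, Matrix.mul_diagonal, Matrix.diagonal_mul, smul_eq_mul]
    unfold uu vv
    rw [show zeta n ^ (-k * (s:ℤ)) * (zeta n ^ (Pc n i * s)
          * Complex.exp (-(Bc n i : ℂ) * θ * I) * A i j
          * (zeta n ^ (-(Pc n j) * s) * Complex.exp ((Bc n j : ℂ) * θ * I)))
        = (zeta n ^ (-k * (s:ℤ)) * zeta n ^ (Pc n i * s) * zeta n ^ (-(Pc n j) * s))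
          * (A i j * (Complex.exp (-(Bc n i : ℂ) * θ * I)
              * Complex.exp ((Bc n j : ℂ) * θ * I))) by ring]
    rw [← zpow_add₀ hz, ← zpow_add₀ hz, ← Complex.exp_add]
    congr 2
    · ring
    · push_cast
      ring
  simp only [hterm]
  rw [← Finset.sum_mul, smul_eq_mul]
  ring

lemma GG_cont (n : ℕ) (A : Matrix (Fin m) (Fin m) ℂ) (k : ℤ) :
    Continuous (GG n A k) := by
  unfold GG
  apply Continuous.fun_smul
  · have : Continuous fun θ : ℝ => ((psi k θ : ℝ):ℂ) :=
      Complex.continuous_ofReal.comp (psi_continuous k)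
    fun_prop
  · apply continuous_finset_sum
    intro s _
    apply Continuous.fun_smul continuous_const
    have hu : Continuous fun θ => (uu (m := m) n s θ) := by
      apply continuous_pi
      intro i
      unfold uu
      apply Continuous.mul continuous_const
      apply Complex.continuous_exp.comp
      fun_prop
    have hv : Continuous fun θ => (vv (m := m) n s θ) := by
      apply continuous_pi
      intro j
      unfold vv
      apply Continuous.mul continuous_const
      apply Complex.continuous_exp.comp
      fun_prop
    exact (hu.matrix_diagonal.matrix_mul continuous_const).matrix_mul hv.matrix_diagonal

lemma GG_norm_le (n : ℕ) (hn : n ≠ 0) (A : Matrix (Fin m) (Fin m) ℂ) (k : ℤ) (θ : ℝ) :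
    ‖Phi (GG n A k θ)‖ ≤ (n:ℝ) * |psi k θ| * ‖Phi A‖ := by
  have h2n : (0:ℝ) < (2*n:ℕ) := by
    have h := Nat.pos_of_ne_zero hn
    positivity
  unfold GG
  rw [Phi_smul, Phi_sum]
  set T := ∑ s ∈ Finset.range (2*n), Phi (zeta n ^ (-k * (s:ℤ)) •
      (Matrix.diagonal (uu n s θ) * A * Matrix.diagonal (vv n s θ))) with hT
  have h1 : ‖T‖ ≤ (2*n:ℕ) * ‖Phi A‖ := by
    rw [hT]
    refine (norm_sum_le _ _).trans ?_
    have hterm : ∀ s ∈ Finset.range (2*n), ‖Phi (zeta n ^ (-k * (s:ℤ)) •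
        (Matrix.diagonal (uu n s θ) * A * Matrix.diagonal (vv n s θ)))‖ ≤ ‖Phi A‖ := by
      intro s _
      rw [Phi_smul]
      refine le_trans (ContinuousLinearMap.opNorm_smul_le _ _) ?_
      rw [norm_zpow, zeta_norm n hn, _root_.one_zpow, one_mul]
      exact Phi_conj_le _ _ _ (fun i => le_of_eq (uu_norm n hn s θ i))
        (fun j => le_of_eq (vv_norm n hn s θ j))
    refine (Finset.sum_le_sum hterm).trans ?_
    rw [Finset.sum_const, Finset.card_range, nsmul_eq_mul]
  have hc : ‖(n:ℂ) * (psi k θ : ℂ) / ((2*n : ℕ):ℂ)‖ = (n:ℝ) * |psi k θ| / (2*n:ℕ) := by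
    rw [norm_div, norm_mul, Complex.norm_natCast, Complex.norm_real,
      Complex.norm_natCast, Real.norm_eq_abs]
  have h2n' : ((2*n:ℕ):ℝ) ≠ 0 := ne_of_gt h2n
  calc ‖((n:ℂ) * (psi k θ : ℂ) / ((2*n : ℕ):ℂ)) • T‖
      ≤ ‖(n:ℂ) * (psi k θ : ℂ) / ((2*n : ℕ):ℂ)‖ * ‖T‖ :=
        ContinuousLinearMap.opNorm_smul_le _ _
    _ = ((n:ℝ) * |psi k θ| / (2*n:ℕ)) * ‖T‖ := by rw [hc]
    _ ≤ ((n:ℝ) * |psi k θ| / (2*n:ℕ)) * ((2*n:ℕ) * ‖Phi A‖) := by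
        apply mul_le_mul_of_nonneg_left h1
        positivity
    _ = (n:ℝ) * |psi k θ| * ‖Phi A‖ := by
        rw [div_mul_eq_mul_div, mul_div_assoc, mul_comm ((2*n:ℕ):ℝ) ‖Phi A‖,
          mul_div_assoc, div_self h2n', mul_one]

lemma int_pair_ne_zero (k l : ℤ) (h : ¬(k = 0 ∧ l = 0)) : ((k:ℂ) + l*I) ≠ 0 := by
  intro h0
  have hre := congrArg Complex.re h0
  have him := congrArg Complex.im h0
  simp at hre him
  exact h ⟨by exact_mod_cast hre, by exact_mod_cast him⟩

lemma Pc_lt (n : ℕ) (hn : n ≠ 0) (hmn : m ≤ n*n) (i : Fin m) :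
    0 ≤ Pc n i ∧ Pc n i < n := by
  constructor
  · exact Int.ofNat_nonneg _
  · have h : (i:ℕ)/n < n := Nat.div_lt_iff_lt_mul (Nat.pos_of_ne_zero hn) |>.mpr
      (lt_of_lt_of_le i.isLt hmn)
    unfold Pc
    exact_mod_cast h

lemma Bc_lt (n : ℕ) (hn : n ≠ 0) (i : Fin m) : 0 ≤ Bc n i ∧ Bc n i < n := by
  constructor
  · exact Int.ofNat_nonneg _
  · have h : (i:ℕ)%n < n := Nat.mod_lt _ (Nat.pos_of_ne_zero hn)
    unfold Bc
    exact_mod_cast h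

lemma coord_inj (n : ℕ) (i j : Fin m) (hP : Pc n i = Pc n j) (hB : Bc n i = Bc n j) :
    i = j := by
  unfold Pc at hP
  unfold Bc at hB
  have hP' : (i:ℕ)/n = (j:ℕ)/n := by exact_mod_cast hP
  have hB' : (i:ℕ)%n = (j:ℕ)%n := by exact_mod_cast hB
  have h1 : (i:ℕ) = n * ((i:ℕ)/n) + (i:ℕ)%n := (Nat.div_add_mod _ _).symm
  rw [hP', hB'] at h1
  rw [Nat.div_add_mod] at h1
  exact Fin.ext h1

lemma CCk_int (n : ℕ) (hn : n ≠ 0) (hmn : m ≤ n*n) (A : Matrix (Fin m) (Fin m) ℂ)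
    (hA : ∀ i, A i i = 0) (k : ℤ) (hk : k.natAbs < n) (i j : Fin m) :
    CCk n A k i j = ∫ θ in (0:ℝ)..(2*Real.pi), GG n A k θ i j := by
  have h2n0 : (2*n : ℕ) ≠ 0 := by omega
  have hnC : ((n:ℕ):ℂ) ≠ 0 := by exact_mod_cast hn
  set q : ℤ := Pc n i - Pc n j with hqdef
  set l : ℤ := Bc n i - Bc n j with hldef
  set S : ℂ := ∑ s ∈ Finset.range (2*n), zeta n ^ ((q - k) * (s:ℤ)) with hSdef
  have hGG : ∀ θ : ℝ, GG n A k θ i j =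
      ((n:ℂ)/((2*n:ℕ):ℂ) * S * A i j) * ((psi k θ : ℂ)
        * Complex.exp (-(l:ℂ) * θ * I)) := fun θ => GG_apply n A k θ i j
  rw [intervalIntegral.integral_congr (g := fun θ : ℝ =>
      ((n:ℂ)/((2*n:ℕ):ℂ) * S * A i j) * ((psi k θ : ℂ)
        * Complex.exp (-(l:ℂ) * θ * I))) (fun θ _ => hGG θ)]
  rw [intervalIntegral.integral_const_mul]
  by_cases hq : q = k
  · have hS : S = ((2*n:ℕ):ℂ) := by
      rw [hSdef, hq]
      simp [sub_self]
    by_cases hij : i = j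
    · subst hij
      have hAii : A i i = 0 := hA i
      rw [hAii]
      simp [CCk, CC, Matrix.of_apply, hq]
    · have hkl : ¬(k = 0 ∧ l = 0) := by
        rintro ⟨hk0, hl0⟩
        apply hij
        apply coord_inj n
        · omega
        · omega
      rw [psi_int k l hkl, hS]
      have hdd : dd n i - dd n j = ((k:ℂ) + (l:ℂ)*I)/((n:ℕ):ℂ) := by
        have hq' : ((Pc n i : ℂ)) - ((Pc n j : ℂ)) = (k:ℂ) := by
          exact_mod_cast congrArg (fun z : ℤ => (z:ℂ)) hq
        have hl' : ((Bc n i : ℂ)) - ((Bc n j : ℂ)) = (l:ℂ) := by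
          push_cast [hldef]
          ring
        have hdd1 : ∀ r : Fin m, dd n r = ((Pc n r : ℂ) + (Bc n r:ℂ)*I)/((n:ℕ):ℂ) := by
          intro r
          unfold dd
          push_cast
          ring
        rw [hdd1 i, hdd1 j, div_sub_div_same]
        congr 1
        linear_combination hq' + I * hl'
      have hkl0 : ((k:ℂ) + l*I) ≠ 0 := int_pair_ne_zero k l hkl
      show (if q = k then CC n A i j else 0) = _
      rw [if_pos hq]
      show (if i = j then 0 else A i j / (dd n i - dd n j)) = _
      rw [if_neg hij, hdd]
      have h2nC : ((2*n:ℕ):ℂ) ≠ 0 := by exact_mod_cast h2n0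
      field_simp
  · have hd0 : q - k ≠ 0 := sub_ne_zero.mpr hq
    have hdlt : (q-k).natAbs < 2*n := by
      have h1 := Pc_lt n hn hmn i
      have h2 := Pc_lt n hn hmn j
      omega
    have hS : S = 0 := by
      rw [hSdef]
      exact zeta_sum (2*n) h2n0 (q-k) hd0 hdlt
    rw [hS]
    show (if q = k then CC n A i j else 0) = _
    rw [if_neg hq]
    ring

lemma CC_sum (n : ℕ) (hn : n ≠ 0) (hmn : m ≤ n*n) (A : Matrix (Fin m) (Fin m) ℂ) :
    ∑ k ∈ Finset.Icc (-((n-1:ℕ):ℤ)) ((n-1:ℕ):ℤ), CCk n A k = CC n A := by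
  ext i j
  rw [Matrix.sum_apply]
  have hmem : Pc n i - Pc n j ∈ Finset.Icc (-((n-1:ℕ):ℤ)) ((n-1:ℕ):ℤ) := by
    rw [Finset.mem_Icc]
    have h1 := Pc_lt n hn hmn i
    have h2 := Pc_lt n hn hmn j
    omega
  rw [Finset.sum_eq_single (Pc n i - Pc n j)]
  · show (if Pc n i - Pc n j = Pc n i - Pc n j then CC n A i j else 0) = _
    rw [if_pos rfl]
  · intro k _ hkne
    show (if Pc n i - Pc n j = k then CC n A i j else 0) = 0
    rw [if_neg (fun h => hkne h.symm)]
  · intro hnot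
    exact absurd hmem hnot

end Stmt3Aux

open Stmt3Aux in
/-- There is an absolute K > 0 such that for every m ≥ 2 there is a single m×m diagonal
matrix B with diagonal entries in Q such that every zero-diagonal A is [B,C] with
‖C‖ ≤ K · (log m)³ · √m · ‖A‖. -/
theorem stmt3 :
    ∃ K : ℝ, 0 < K ∧ ∀ (m : ℕ), 2 ≤ m →
      ∃ d : Fin m → ℂ, (∀ i, d i ∈ Qsq) ∧
        ∀ A : Matrix (Fin m) (Fin m) ℂ, (∀ i, A i i = 0) →
          ∃ C : Matrix (Fin m) (Fin m) ℂ,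
            A = Matrix.diagonal d * C - C * Matrix.diagonal d ∧
            opNorm C ≤ K * (Real.log m) ^ 3 * Real.sqrt m * opNorm A := by
  refine ⟨200, by norm_num, ?_⟩
  intro m hm
  set n : ℕ := m.sqrt + 1 with hndef
  have hsq1 : 1 ≤ m.sqrt := Nat.sqrt_pos.mpr (by omega)
  have hn0 : n ≠ 0 := by omega
  have hnpos : (0:ℝ) < n := by exact_mod_cast Nat.pos_of_ne_zero hn0
  have hmn : m ≤ n*n := Nat.le_of_lt (Nat.lt_succ_sqrt m)
  refine ⟨dd n, ?_, ?_⟩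
  · intro i
    have hP := Pc_lt n hn0 hmn i
    have hB := Bc_lt n hn0 i
    have hre : (dd n i).re = (Pc n i : ℝ)/n := by
      unfold Stmt3Aux.dd
      simp
    have him : (dd n i).im = (Bc n i : ℝ)/n := by
      unfold Stmt3Aux.dd
      simp
    have hPn : ((Pc n i : ℝ)) ≤ (n:ℝ) := by
      have := hP.2
      exact_mod_cast le_of_lt this
    have hP0 : (0:ℝ) ≤ (Pc n i : ℝ) := by exact_mod_cast hP.1
    have hBn : ((Bc n i : ℝ)) ≤ (n:ℝ) := by
      have := hB.2
      exact_mod_cast le_of_lt this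
    have hB0 : (0:ℝ) ≤ (Bc n i : ℝ) := by exact_mod_cast hB.1
    constructor
    · rw [hre, _root_.abs_of_nonneg (div_nonneg hP0 (le_of_lt hnpos)), div_le_one hnpos]
      exact hPn
    · rw [him, _root_.abs_of_nonneg (div_nonneg hB0 (le_of_lt hnpos)), div_le_one hnpos]
      exact hBn
  · intro A hA
    refine ⟨CC n A, ?_, ?_⟩
    · -- commutator identity
      ext i j
      rw [Matrix.sub_apply]
      by_cases hij : i = j
      · subst hij
        have : CC n A i i = 0 := by simp [CC]
        rw [Matrix.diagonal_mul, Matrix.mul_diagonal, this]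
        rw [hA i]
        ring
      · have hdij : dd n i - dd n j ≠ 0 := by
          intro h0
          apply hij
          have h1 : dd n i = dd n j := by linear_combination h0
          have hre := congrArg Complex.re h1
          have him := congrArg Complex.im h1
          have hre' : (Pc n i : ℝ)/n = (Pc n j : ℝ)/n := by
            unfold Stmt3Aux.dd at hre
            simpa using hre
          have him' : (Bc n i : ℝ)/n = (Bc n j : ℝ)/n := by
            unfold Stmt3Aux.dd at him
            simpa using him
          have hP : Pc n i = Pc n j := by
            field_simp at hre'
            exact_mod_cast hre'
          have hB : Bc n i = Bc n j := by
            field_simp at him'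
            exact_mod_cast him'
          exact coord_inj n i j hP hB
        rw [Matrix.diagonal_mul, Matrix.mul_diagonal]
        have hCij : CC n A i j = A i j / (dd n i - dd n j) := by simp [CC, hij]
        rw [hCij]
        field_simp
    · -- norm bound
      have hbound : ∀ k ∈ Finset.Icc (-((n-1:ℕ):ℤ)) ((n-1:ℕ):ℤ),
          ‖Phi (CCk n A k)‖
            ≤ ((n:ℝ) * ‖Phi A‖) * (if k = 0 then Real.pi else 1/|(k:ℝ)|) := by
        intro k hk
        have hkabs : k.natAbs < n := by
          rw [Finset.mem_Icc] at hk
          omega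
        have hgcont : Continuous fun θ => (n:ℝ) * |psi k θ| * ‖Phi A‖ := by
          have := (psi_continuous k).abs
          fun_prop
        have hkey := key (GG n A k) (GG_cont n A k) (CCk n A k)
          (fun i j => CCk_int n hn0 hmn A hA k hkabs i j)
          (fun θ => (n:ℝ) * |psi k θ| * ‖Phi A‖) hgcont
          (fun θ _ => GG_norm_le n hn0 A k θ)
        refine hkey.trans ?_
        have heq : (∫ θ in (0:ℝ)..(2*Real.pi), (n:ℝ) * |psi k θ| * ‖Phi A‖)
            = ((n:ℝ) * ‖Phi A‖) * ∫ θ in (0:ℝ)..(2*Real.pi), |psi k θ| := by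
          rw [← intervalIntegral.integral_const_mul]
          apply intervalIntegral.integral_congr
          intro θ _
          ring
        rw [heq]
        apply mul_le_mul_of_nonneg_left (psi_abs_integral k)
        positivity
      have hsum : ‖Phi (CC n A)‖
          ≤ ((n:ℝ) * ‖Phi A‖) * (Real.pi + 2 + 2*Real.log ((n-1:ℕ):ℝ)) := by
        rw [← CC_sum n hn0 hmn A, Phi_sum]
        refine (norm_sum_le _ _).trans ?_
        refine (Finset.sum_le_sum hbound).trans ?_
        rw [← Finset.mul_sum]
        apply mul_le_mul_of_nonneg_left (wsum_bound (n-1) (by omega))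
        positivity
      rw [opNorm_eq_Phi, opNorm_eq_Phi]
      refine hsum.trans ?_
      -- numeric chain
      set L := Real.log m with hLdef
      have hm1R : (1:ℝ) ≤ m := by exact_mod_cast (by omega : 1 ≤ m)
      have hL2 : Real.log 2 ≤ L := Real.log_le_log (by norm_num)
        (by exact_mod_cast hm)
      have hLhalf : (1:ℝ)/2 ≤ L := by
        have := Real.log_two_gt_d9
        linarith
      have hsqm1 : (1:ℝ) ≤ Real.sqrt m := by
        rw [show (1:ℝ) = Real.sqrt 1 by rw [Real.sqrt_one]]
        exact Real.sqrt_le_sqrt hm1R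
      have hnle : (n:ℝ) ≤ 2 * Real.sqrt m := by
        have h1 : ((m.sqrt : ℕ):ℝ) ≤ Real.sqrt m := Real.nat_sqrt_le_real_sqrt
        have h2 : (n:ℝ) = ((m.sqrt : ℕ):ℝ) + 1 := by
          rw [hndef]
          push_cast
          ring
        linarith
      have hlogle : Real.log ((n-1:ℕ):ℝ) ≤ L := by
        apply Real.log_le_log
        · have : (1:ℕ) ≤ n-1 := by omega
          exact_mod_cast Nat.pos_of_ne_zero (by omega)
        · have : (n-1:ℕ) ≤ m := by
            have := Nat.sqrt_le_self m
            omega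
          exact_mod_cast this
      have hlog0 : (0:ℝ) ≤ Real.log ((n-1:ℕ):ℝ) := by
        apply Real.log_nonneg
        have : (1:ℕ) ≤ n-1 := by omega
        exact_mod_cast this
      have hπ4 : Real.pi ≤ 4 := Real.pi_le_four
      have hmid : Real.pi + 2 + 2*Real.log ((n-1:ℕ):ℝ) ≤ 56 * L^3 := by
        have h6 : Real.pi + 2 + 2*Real.log ((n-1:ℕ):ℝ) ≤ 6 + 2*L := by linarith
        have h7 : 6 + 2*L ≤ 14*L := by linarith
        have h8 : 14*L ≤ 56*L^3 := by nlinarith [sq_nonneg L, sq_nonneg (L - 1/2)]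
        linarith
      have hmid0 : (0:ℝ) ≤ Real.pi + 2 + 2*Real.log ((n-1:ℕ):ℝ) := by
        have := Real.pi_pos
        linarith
      have hXnn : (0:ℝ) ≤ ‖Phi A‖ := norm_nonneg _
      have hcoef : (n:ℝ) * (Real.pi + 2 + 2*Real.log ((n-1:ℕ):ℝ))
          ≤ 200 * L^3 * Real.sqrt m := by
        calc (n:ℝ) * (Real.pi + 2 + 2*Real.log ((n-1:ℕ):ℝ))
            ≤ (2*Real.sqrt m) * (56 * L^3) := by
              apply mul_le_mul hnle hmid hmid0
              positivity
          _ ≤ 200 * L^3 * Real.sqrt m := by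
              have hs : (0:ℝ) ≤ Real.sqrt m := Real.sqrt_nonneg _
              have hL3 : (0:ℝ) ≤ L^3 := by positivity
              nlinarith
      calc ((n:ℝ) * ‖Phi A‖) * (Real.pi + 2 + 2*Real.log ((n-1:ℕ):ℝ))
          = ((n:ℝ) * (Real.pi + 2 + 2*Real.log ((n-1:ℕ):ℝ))) * ‖Phi A‖ := by ring
        _ ≤ (200 * L^3 * Real.sqrt m) * ‖Phi A‖ :=
            mul_le_mul_of_nonneg_right hcoef hXnn
        _ = 200 * L^3 * Real.sqrt m * ‖Phi A‖ := by ring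
end

section
/- Let 0 < ε < 1 and let m be a positive integer. Let A be a 4m×4m complex matrix, regarded as a 4×4 block matrix (A_{ij})_{1≤i,j≤4} with blocks of size m×m. Suppose that for each i ∈ {1,2,3,4} there exist an m×m diagonal matrix B_i with all diagonal entries in the square Q and an m×m matrix C_i such that A_{ii} = B_i C_i − C_i B_i. Then there exist a 4m×4m diagonal matrix B with all diagonal entries in Q and a 4m×4m matrix C such that A = BC − CB and ‖C‖ ≤ (2/(1−ε)) · max_{1≤i≤4} ‖C_i‖ + 6‖A‖/ε². -/
set_option maxHeartbeats 1600000

open Matrix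
open scoped Matrix.Norms.L2Operator

lemma opNorm_eq {ι κ : Type*} [Fintype ι] [Fintype κ] [DecidableEq κ]
    (A : Matrix ι κ ℂ) : opNorm A = ‖A‖ := rfl


lemma eucl_sq {ι : Type*} [Fintype ι] (x : EuclideanSpace ℂ ι) :
    ∑ i, ‖x i‖ ^ 2 = ‖x‖ ^ 2 := by
  rw [EuclideanSpace.norm_eq, Real.sq_sqrt]
  positivity

lemma eucl_norm_le {ι : Type*} [Fintype ι] (y : EuclideanSpace ℂ ι) (c : ℝ) (hc : 0 ≤ c)
    (h : ∑ i, ‖y i‖ ^ 2 ≤ c ^ 2) : ‖y‖ ≤ c := by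
  rw [EuclideanSpace.norm_eq]
  calc Real.sqrt (∑ i, ‖y i‖ ^ 2) ≤ Real.sqrt (c ^ 2) := Real.sqrt_le_sqrt h
  _ = c := by rw [Real.sqrt_sq hc]

lemma matrix_norm_le_bound {ι κ : Type*} [Fintype ι] [Fintype κ] [DecidableEq κ]
    (A : Matrix ι κ ℂ) (c : ℝ) (hc : 0 ≤ c)
    (h : ∀ x : EuclideanSpace ℂ κ,
      ‖(WithLp.equiv 2 (ι → ℂ)).symm (A *ᵥ (WithLp.equiv 2 (κ → ℂ)) x)‖ ≤ c * ‖x‖) :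
    ‖A‖ ≤ c := by
  rw [Matrix.l2_opNorm_def]
  refine ContinuousLinearMap.opNorm_le_bound _ hc fun x => ?_
  simpa [Matrix.toEuclideanLin_apply] using h x

-- mulVec norm in Euclidean shape, via squares
lemma mulVec_norm_sq_le {ι κ : Type*} [Fintype ι] [Fintype κ] [DecidableEq κ]
    (A : Matrix ι κ ℂ) (v : κ → ℂ) :
    ∑ s, ‖(A *ᵥ v) s‖ ^ 2 ≤ ‖A‖ ^ 2 * ∑ t, ‖v t‖ ^ 2 := by
  have h := Matrix.l2_opNorm_mulVec A ((WithLp.equiv 2 (κ → ℂ)).symm v)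
  have h1 : ∑ s, ‖(A *ᵥ v) s‖ ^ 2
      = ‖(EuclideanSpace.equiv ι ℂ).symm (A *ᵥ v)‖ ^ 2 := by
    rw [← eucl_sq]; rfl
  have h2 : ∑ t, ‖v t‖ ^ 2 = ‖(WithLp.equiv 2 (κ → ℂ)).symm v‖ ^ 2 := by
    rw [← eucl_sq]; rfl
  rw [h1, h2, ← mul_pow]
  have h3 : (0:ℝ) ≤ ‖(EuclideanSpace.equiv ι ℂ).symm (A *ᵥ v)‖ := norm_nonneg _
  have h4 : ‖(EuclideanSpace.equiv ι ℂ).symm (A *ᵥ v)‖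
      ≤ ‖A‖ * ‖(WithLp.equiv 2 (κ → ℂ)).symm v‖ := h
  nlinarith

lemma compression_le {n m : Type*} [Fintype n] [Fintype m] [DecidableEq n] [DecidableEq m]
    (A : Matrix (n × m) (n × m) ℂ) (i j : n) :
    ‖Matrix.of (fun s t => A (i, s) (j, t))‖ ≤ ‖A‖ := by
  refine matrix_norm_le_bound _ _ (norm_nonneg A) fun x => ?_
  set xf : m → ℂ := (WithLp.equiv 2 (m → ℂ)) x with hxf
  set xt : n × m → ℂ := fun p => if p.1 = j then xf p.2 else 0 with hxt
  refine eucl_norm_le _ _ (by positivity) ?_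
  have key : ∀ s, ((Matrix.of (fun s t => A (i, s) (j, t))) *ᵥ xf) s = (A *ᵥ xt) (i, s) := by
    intro s
    simp only [Matrix.mulVec, dotProduct, Matrix.of_apply, hxt]
    rw [Fintype.sum_prod_type]
    rw [Finset.sum_comm]
    congr 1 with t
    simp [Finset.sum_ite_eq, mul_ite]
  have hsum : ∑ s, ‖((WithLp.equiv 2 (m → ℂ)).symm
      ((Matrix.of (fun s t => A (i, s) (j, t))) *ᵥ xf)) s‖ ^ 2
      = ∑ s, ‖(A *ᵥ xt) (i, s)‖ ^ 2 := by
    refine Finset.sum_congr rfl fun s _ => ?_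
    rw [WithLp.equiv_symm_apply, PiLp.toLp_apply, key s]
  rw [hsum]
  have hle : ∑ s, ‖(A *ᵥ xt) (i, s)‖ ^ 2 ≤ ∑ p : n × m, ‖(A *ᵥ xt) p‖ ^ 2 := by
    rw [Fintype.sum_prod_type]
    exact Finset.single_le_sum (f := fun a => ∑ b, ‖(A *ᵥ xt) (a, b)‖ ^ 2)
      (fun a _ => by positivity) (Finset.mem_univ i)
  have hxtn : ∑ p : n × m, ‖xt p‖ ^ 2 = ∑ t, ‖xf t‖ ^ 2 := by
    rw [Fintype.sum_prod_type]
    have : ∀ a : n, ∑ b, ‖xt (a, b)‖ ^ 2 = if a = j then ∑ b, ‖xf b‖ ^ 2 else 0 := by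
      intro a; by_cases h : a = j <;> simp [hxt, h]
    simp only [this]
    simp
  have hAv := mulVec_norm_sq_le A xt
  have hxn : ∑ t, ‖xf t‖ ^ 2 = ‖x‖ ^ 2 := by rw [← eucl_sq]; rfl
  calc ∑ s, ‖(A *ᵥ xt) (i, s)‖ ^ 2 ≤ ∑ p : n × m, ‖(A *ᵥ xt) p‖ ^ 2 := hle
    _ ≤ ‖A‖ ^ 2 * ∑ p : n × m, ‖xt p‖ ^ 2 := hAv
    _ = ‖A‖ ^ 2 * ‖x‖ ^ 2 := by rw [hxtn, hxn]
    _ = (‖A‖ * ‖x‖) ^ 2 := by ring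

lemma embed_le {n m : Type*} [Fintype n] [Fintype m] [DecidableEq n] [DecidableEq m]
    (X : Matrix m m ℂ) (i j : n) :
    ‖Matrix.of (fun p q : n × m => if p.1 = i ∧ q.1 = j then X p.2 q.2 else 0)‖ ≤ ‖X‖ := by
  refine matrix_norm_le_bound _ _ (norm_nonneg X) fun v => ?_
  set vf : n × m → ℂ := (WithLp.equiv 2 (n × m → ℂ)) v with hvf
  set vj : m → ℂ := fun t => vf (j, t) with hvj
  refine eucl_norm_le _ _ (by positivity) ?_
  set E := Matrix.of (fun p q : n × m => if p.1 = i ∧ q.1 = j then X p.2 q.2 else 0) with hE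
  have key : ∀ p : n × m, (E *ᵥ vf) p = if p.1 = i then (X *ᵥ vj) p.2 else 0 := by
    intro p
    simp only [Matrix.mulVec, dotProduct, hE, Matrix.of_apply]
    by_cases h : p.1 = i
    · simp only [h, true_and, if_true]
      rw [Fintype.sum_prod_type]
      rw [Finset.sum_comm]
      congr 1 with t
      simp [hvj, mul_ite, Finset.sum_ite_eq]
    · simp [h]
  have hsum : ∑ p : n × m, ‖((WithLp.equiv 2 (n × m → ℂ)).symm (E *ᵥ vf)) p‖ ^ 2
      = ∑ s, ‖(X *ᵥ vj) s‖ ^ 2 := by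
    have : ∀ p : n × m, ‖((WithLp.equiv 2 (n × m → ℂ)).symm (E *ᵥ vf)) p‖ ^ 2
        = if p.1 = i then ‖(X *ᵥ vj) p.2‖ ^ 2 else 0 := by
      intro p
      rw [WithLp.equiv_symm_apply, PiLp.toLp_apply, key p]
      by_cases h : p.1 = i <;> simp [h]
    simp only [this]
    rw [Fintype.sum_prod_type]
    simp [Finset.sum_ite_eq]
  rw [hsum]
  have hAv := mulVec_norm_sq_le X vj
  have hvjn : ∑ t, ‖vj t‖ ^ 2 ≤ ‖v‖ ^ 2 := by
    rw [← eucl_sq]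
    have : ∀ t, ‖vj t‖ ^ 2 = ‖v (j, t)‖ ^ 2 := fun t => rfl
    simp only [this]
    rw [Fintype.sum_prod_type]
    exact Finset.single_le_sum (f := fun a => ∑ b, ‖v (a, b)‖ ^ 2)
      (fun a _ => by positivity) (Finset.mem_univ j)
  have hX0 : (0:ℝ) ≤ ‖X‖ := norm_nonneg _
  calc ∑ s, ‖(X *ᵥ vj) s‖ ^ 2 ≤ ‖X‖ ^ 2 * ∑ t, ‖vj t‖ ^ 2 := hAv
    _ ≤ ‖X‖ ^ 2 * ‖v‖ ^ 2 := by nlinarith [norm_nonneg v]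
    _ = (‖X‖ * ‖v‖) ^ 2 := by ring

lemma blockdiag_le {n m : Type*} [Fintype n] [Fintype m] [DecidableEq n] [DecidableEq m]
    (M : n → Matrix m m ℂ) (c : ℝ) (hc : 0 ≤ c) (h : ∀ i, ‖M i‖ ≤ c) :
    ‖Matrix.of (fun p q : n × m => if p.1 = q.1 then M p.1 p.2 q.2 else 0)‖ ≤ c := by
  refine matrix_norm_le_bound _ _ hc fun v => ?_
  set vf : n × m → ℂ := (WithLp.equiv 2 (n × m → ℂ)) v with hvf
  refine eucl_norm_le _ _ (by positivity) ?_
  set D := Matrix.of (fun p q : n × m => if p.1 = q.1 then M p.1 p.2 q.2 else 0) with hD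
  have key : ∀ p : n × m, (D *ᵥ vf) p = (M p.1 *ᵥ (fun t => vf (p.1, t))) p.2 := by
    intro p
    simp only [Matrix.mulVec, dotProduct, hD, Matrix.of_apply]
    rw [Fintype.sum_prod_type]
    rw [Finset.sum_comm]
    congr 1 with t
    simp [mul_ite, Finset.sum_ite_eq]
  have hsum : ∑ p : n × m, ‖((WithLp.equiv 2 (n × m → ℂ)).symm (D *ᵥ vf)) p‖ ^ 2
      = ∑ a : n, ∑ s, ‖(M a *ᵥ (fun t => vf (a, t))) s‖ ^ 2 := by
    rw [Fintype.sum_prod_type]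
    refine Finset.sum_congr rfl fun a _ => Finset.sum_congr rfl fun s _ => ?_
    rw [WithLp.equiv_symm_apply, PiLp.toLp_apply, key (a, s)]
  rw [hsum]
  have hblock : ∀ a : n, ∑ s, ‖(M a *ᵥ (fun t => vf (a, t))) s‖ ^ 2
      ≤ c ^ 2 * ∑ t, ‖vf (a, t)‖ ^ 2 := by
    intro a
    refine le_trans (mulVec_norm_sq_le (M a) _) ?_
    have := h a
    have h0 : (0:ℝ) ≤ ‖M a‖ := norm_nonneg _
    have hs : (0:ℝ) ≤ ∑ t, ‖vf (a, t)‖ ^ 2 := by positivity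
    exact mul_le_mul_of_nonneg_right (pow_le_pow_left₀ h0 this 2) hs
  calc ∑ a : n, ∑ s, ‖(M a *ᵥ (fun t => vf (a, t))) s‖ ^ 2
      ≤ ∑ a : n, c ^ 2 * ∑ t, ‖vf (a, t)‖ ^ 2 := Finset.sum_le_sum fun a _ => hblock a
    _ = c ^ 2 * ∑ a : n, ∑ t, ‖vf (a, t)‖ ^ 2 := by rw [Finset.mul_sum]
    _ = c ^ 2 * ‖v‖ ^ 2 := by rw [← eucl_sq, Fintype.sum_prod_type]; rfl
    _ = (c * ‖v‖) ^ 2 := by ring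

lemma diagonal_norm_le {ι : Type*} [Fintype ι] [DecidableEq ι] (v : ι → ℂ) (c : ℝ) (hc : 0 ≤ c)
    (h : ∀ i, ‖v i‖ ≤ c) : ‖Matrix.diagonal v‖ ≤ c := by
  refine matrix_norm_le_bound _ c hc fun x => ?_
  refine eucl_norm_le _ _ (by positivity) ?_
  have key : ∀ i : ι, ‖((WithLp.equiv 2 (ι → ℂ)).symm
      ((Matrix.diagonal v) *ᵥ (WithLp.equiv 2 (ι → ℂ)) x)) i‖ ^ 2 ≤ c ^ 2 * ‖x i‖ ^ 2 := by
    intro i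
    have hmv : ((Matrix.diagonal v) *ᵥ (WithLp.equiv 2 (ι → ℂ)) x) i = v i * x i :=
      Matrix.mulVec_diagonal _ _ _
    rw [show ((WithLp.equiv 2 (ι → ℂ)).symm
      ((Matrix.diagonal v) *ᵥ (WithLp.equiv 2 (ι → ℂ)) x)) i = v i * x i from hmv]
    rw [norm_mul, mul_pow]
    gcongr
    exact h i
  calc ∑ i, ‖((WithLp.equiv 2 (ι → ℂ)).symm
      ((Matrix.diagonal v) *ᵥ (WithLp.equiv 2 (ι → ℂ)) x)) i‖ ^ 2
      ≤ ∑ i, c ^ 2 * ‖x i‖ ^ 2 := Finset.sum_le_sum fun i _ => key i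
    _ = c ^ 2 * ∑ i, ‖x i‖ ^ 2 := by rw [Finset.mul_sum]
    _ = (c * ‖x‖) ^ 2 := by rw [eucl_sq, mul_pow]


private lemma key_div (a x y L : ℂ) (h1 : x - y ≠ 0) (h2 : x + L ≠ 0) :
    a / (x - y) = (x + L)⁻¹ * a + (x + L)⁻¹ * (a / (x - y) * (y + L)) := by
  field_simp
  ring

lemma sylvester {m : Type*} [Fintype m] [DecidableEq m] {ε : ℝ} (hε0 : 0 < ε) (hε1 : ε < 1)
    (d e : m → ℂ) (A : Matrix m m ℂ)
    (hd : ∀ s, ε ≤ (d s).re)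
    (he : ∀ t, (e t).re ≤ -ε ∧ -1 ≤ (e t).re ∧ |(e t).im| ≤ 1) :
    ‖Matrix.of (fun s t => A s t / (d s - e t))‖ ≤ ‖A‖ / (2 * ε ^ 2) := by
  obtain ⟨u, hu_def⟩ : ∃ u : ℝ, u = 1 / (4 * ε * (1 - ε)) := ⟨_, rfl⟩
  obtain ⟨w, hw_def⟩ : ∃ w : ℝ, w = 2 * ε * (1 - ε) := ⟨_, rfl⟩
  have hε1' : (0:ℝ) < 1 - ε := by linarith
  have hu0 : 0 < u := by rw [hu_def]; positivity
  have hw0 : 0 < w := by rw [hw_def]; positivity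
  have huw : u * w = 1 / 2 := by rw [hu_def, hw_def]; field_simp; ring
  have hu1 : 1 ≤ u := by
    rw [hu_def, le_div_iff₀ (by positivity)]
    nlinarith [sq_nonneg (2 * ε - 1)]
  obtain ⟨l, hl_def⟩ : ∃ l : ℝ, l = ε + u := ⟨_, rfl⟩
  have hl1 : 1 ≤ l := by rw [hl_def]; linarith
  obtain ⟨b, hb_def⟩ : ∃ b : ℝ, b = Real.sqrt (u ^ 2 + 1) := ⟨_, rfl⟩
  have hb0 : 0 ≤ b := by rw [hb_def]; exact Real.sqrt_nonneg _
  have hbsq : b ^ 2 = u ^ 2 + 1 := by rw [hb_def]; exact Real.sq_sqrt (by positivity)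
  have hb : b ≤ u + w := by nlinarith
  have hlε : (0:ℝ) < l + ε := by linarith
  have hne : ∀ s t, d s - e t ≠ 0 := by
    intro s t h0
    have h0' : (d s - e t).re = 0 := by rw [h0]; simp
    rw [Complex.sub_re] at h0'
    have := hd s; have := (he t).1; linarith
  have hdl : ∀ s, d s + (l:ℂ) ≠ 0 := by
    intro s h0
    have h0' : (d s + (l:ℂ)).re = 0 := by rw [h0]; simp
    rw [Complex.add_re, Complex.ofReal_re] at h0'
    have := hd s; linarith
  set X : Matrix m m ℂ := Matrix.of (fun s t => A s t / (d s - e t)) with hX_def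
  set P : Matrix m m ℂ := Matrix.diagonal (fun s => (d s + (l:ℂ))⁻¹) with hP_def
  set Q' : Matrix m m ℂ := Matrix.diagonal (fun t => e t + (l:ℂ)) with hQ_def
  have hId : X = P * A + P * (X * Q') := by
    ext s t
    simp only [hX_def, hP_def, hQ_def, Matrix.add_apply, Matrix.diagonal_mul,
      Matrix.mul_diagonal, Matrix.of_apply]
    exact key_div _ _ _ _ (hne s t) (hdl s)
  have hPn : ‖P‖ ≤ (l + ε)⁻¹ := by
    refine diagonal_norm_le _ _ (by positivity) fun s => ?_
    rw [norm_inv]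
    refine inv_anti₀ hlε ?_
    have h1 : (d s + (l:ℂ)).re ≤ ‖d s + (l:ℂ)‖ := Complex.re_le_norm _
    rw [Complex.add_re, Complex.ofReal_re] at h1
    have := hd s
    linarith
  have hQn : ‖Q'‖ ≤ b := by
    refine diagonal_norm_le _ _ hb0 fun t => ?_
    have h2 : ‖e t + (l:ℂ)‖ ^ 2 = ((e t).re + l) ^ 2 + (e t).im ^ 2 := by
      rw [Complex.sq_norm, Complex.normSq_apply]
      simp only [Complex.add_re, Complex.add_im, Complex.ofReal_re, Complex.ofReal_im]
      ring
    obtain ⟨h3, h4, h5⟩ := he t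
    have h6 : ((e t).re + l) ^ 2 ≤ (l - ε) ^ 2 := by nlinarith
    have h7 : (e t).im ^ 2 ≤ 1 := by nlinarith [abs_nonneg (e t).im, sq_abs (e t).im]
    have hlu : l - ε = u := by rw [hl_def]; ring
    have h8 : ‖e t + (l:ℂ)‖ ^ 2 ≤ b ^ 2 := by rw [h2, hbsq, ← hlu]; nlinarith
    nlinarith [norm_nonneg (e t + (l:ℂ))]
  have hA0 : (0:ℝ) ≤ ‖A‖ := norm_nonneg _
  have hX0 : (0:ℝ) ≤ ‖X‖ := norm_nonneg _
  have hP0 : (0:ℝ) ≤ ‖P‖ := norm_nonneg _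
  have hQ0 : (0:ℝ) ≤ ‖Q'‖ := norm_nonneg _
  have hXn : ‖X‖ ≤ (l + ε)⁻¹ * ‖A‖ + (l + ε)⁻¹ * (b * ‖X‖) := by
    calc ‖X‖ = ‖P * A + P * (X * Q')‖ := by rw [← hId]
      _ ≤ ‖P * A‖ + ‖P * (X * Q')‖ := norm_add_le _ _
      _ ≤ ‖P‖ * ‖A‖ + ‖P‖ * (‖X‖ * ‖Q'‖) := by
          refine add_le_add (Matrix.l2_opNorm_mul _ _) ?_
          exact le_trans (Matrix.l2_opNorm_mul _ _)
            (mul_le_mul_of_nonneg_left (Matrix.l2_opNorm_mul _ _) hP0)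
      _ ≤ (l + ε)⁻¹ * ‖A‖ + (l + ε)⁻¹ * (b * ‖X‖) := by
          refine add_le_add (mul_le_mul_of_nonneg_right hPn hA0) ?_
          refine mul_le_mul hPn ?_ (by positivity) (by positivity)
          calc ‖X‖ * ‖Q'‖ ≤ ‖X‖ * b := mul_le_mul_of_nonneg_left hQn hX0
            _ = b * ‖X‖ := mul_comm _ _
  have h1 : (l + ε) * ‖X‖ ≤ ‖A‖ + b * ‖X‖ := by
    have hm := mul_le_mul_of_nonneg_left hXn (le_of_lt hlε)
    have e1 : (l + ε) * ((l + ε)⁻¹ * ‖A‖ + (l + ε)⁻¹ * (b * ‖X‖)) = ‖A‖ + b * ‖X‖ := by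
      field_simp
    linarith [e1 ▸ hm]
  have h2 : 2 * ε ^ 2 ≤ (l + ε) - b := by
    have e2 : 2 * ε - w = 2 * ε ^ 2 := by rw [hw_def]; ring
    have e3 : l + ε = u + 2 * ε := by rw [hl_def]; ring
    linarith
  rw [le_div_iff₀ (by positivity)]
  nlinarith [mul_le_mul_of_nonneg_left h2 hX0]

private def x4 : Fin 4 → ℝ := ![1, 1, -1, -1]
private def y4 : Fin 4 → ℝ := ![1, -1, 1, -1]

private lemma x4_pm : ∀ i, x4 i = 1 ∨ x4 i = -1 := by
  intro i; fin_cases i <;> simp [x4]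

private lemma y4_pm : ∀ i, y4 i = 1 ∨ y4 i = -1 := by
  intro i; fin_cases i <;> simp [y4]

private lemma xy_ne : ∀ i j : Fin 4, i ≠ j → x4 i ≠ x4 j ∨ y4 i ≠ y4 j := by
  intro i j h
  fin_cases i <;> fin_cases j <;> simp_all [x4, y4] <;> norm_num

private lemma helper1 {ε α s R : ℝ} (hε0 : 0 < ε) (hε1 : ε < 1) (hα : α = (1 - ε)/2)
    (hs : s = 1 ∨ s = -1) (hR : -1 ≤ R) (hR' : R ≤ 1) :
    ε ≤ s * (α * R + (1 + ε)/2 * s) := by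
  rcases hs with h | h <;> subst h <;> nlinarith

private lemma helper2 {ε α s t R : ℝ} (hε0 : 0 < ε) (hε1 : ε < 1) (hα : α = (1 - ε)/2)
    (hs : s = 1 ∨ s = -1) (ht : t = 1 ∨ t = -1) (hst : s ≠ t) (hR : -1 ≤ R) (hR' : R ≤ 1) :
    s * (α * R + (1 + ε)/2 * t) ≤ -ε ∧ -1 ≤ s * (α * R + (1 + ε)/2 * t) := by
  rcases hs with h | h <;> rcases ht with h' | h' <;> subst h <;> subst h' <;>
    first
      | (exact absurd rfl hst)
      | (constructor <;> nlinarith)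

private lemma helper3 {ε α g R : ℝ} (hε0 : 0 < ε) (hε1 : ε < 1) (hα : α = (1 - ε)/2)
    (hg : g = 1 ∨ g = -1) (hR : -1 ≤ R) (hR' : R ≤ 1) :
    |α * R + (1 + ε)/2 * g| ≤ 1 := by
  rw [abs_le]
  rcases hg with h | h <;> subst h <;> constructor <;> nlinarith

/-- If each of the four diagonal blocks A_{ii} of a 4m×4m matrix A is a commutator
[Bᵢ, Cᵢ] with Bᵢ diagonal with entries in Q, then A = [B, C] with B diagonal with
entries in Q and ‖C‖ ≤ (2/(1−ε)) · maxᵢ ‖Cᵢ‖ + 6‖A‖/ε². -/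
theorem stmt5 (ε : ℝ) (hε0 : 0 < ε) (hε1 : ε < 1) (m : ℕ) (hm : 0 < m)
    (A : Matrix (Fin 4 × Fin m) (Fin 4 × Fin m) ℂ)
    (B : Fin 4 → Fin m → ℂ) (C : Fin 4 → Matrix (Fin m) (Fin m) ℂ)
    (hB : ∀ i s, B i s ∈ Qsq)
    (hcomm : ∀ i, (Matrix.of fun s t => A (i, s) (i, t)) =
      Matrix.diagonal (B i) * C i - C i * Matrix.diagonal (B i)) :
    ∃ (d : Fin 4 × Fin m → ℂ) (C' : Matrix (Fin 4 × Fin m) (Fin 4 × Fin m) ℂ),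
      (∀ p, d p ∈ Qsq) ∧
      A = Matrix.diagonal d * C' - C' * Matrix.diagonal d ∧
      opNorm C' ≤ (2 / (1 - ε)) * (⨆ i, opNorm (C i)) + 6 * opNorm A / ε ^ 2 := by
  obtain ⟨α, hα_def⟩ : ∃ a : ℝ, a = (1 - ε)/2 := ⟨_, rfl⟩
  have hε1' : (0:ℝ) < 1 - ε := by linarith
  have hα0 : 0 < α := by rw [hα_def]; linarith
  set c0 : Fin 4 → ℂ := fun i =>
    (((1 + ε)/2 * x4 i : ℝ) : ℂ) + (((1 + ε)/2 * y4 i : ℝ) : ℂ) * Complex.I with hc0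
  set d : Fin 4 × Fin m → ℂ := fun p => (α : ℂ) * B p.1 p.2 + c0 p.1 with hd_def
  have hBre : ∀ i s, -1 ≤ (B i s).re ∧ (B i s).re ≤ 1 := by
    intro i s
    have := (hB i s).1
    rw [abs_le] at this
    exact this
  have hBim : ∀ i s, -1 ≤ (B i s).im ∧ (B i s).im ≤ 1 := by
    intro i s
    have := (hB i s).2
    rw [abs_le] at this
    exact this
  have hdre : ∀ p : Fin 4 × Fin m, (d p).re = α * (B p.1 p.2).re + (1 + ε)/2 * x4 p.1 := by
    intro p
    simp [hd_def, hc0, Complex.add_re, Complex.mul_re, Complex.ofReal_re, Complex.ofReal_im,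
      Complex.I_re, Complex.I_im]
  have hdim : ∀ p : Fin 4 × Fin m, (d p).im = α * (B p.1 p.2).im + (1 + ε)/2 * y4 p.1 := by
    intro p
    simp [hd_def, hc0, Complex.add_im, Complex.mul_im, Complex.ofReal_re, Complex.ofReal_im,
      Complex.I_re, Complex.I_im]
  -- membership in Q
  have hQmem : ∀ p : Fin 4 × Fin m, d p ∈ Qsq := by
    intro p
    constructor
    · rw [hdre p]
      exact helper3 hε0 hε1 hα_def (x4_pm p.1) (hBre p.1 p.2).1 (hBre p.1 p.2).2
    · rw [hdim p]
      exact helper3 hε0 hε1 hα_def (y4_pm p.1) (hBim p.1 p.2).1 (hBim p.1 p.2).2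
  -- separation
  have hsep : ∀ i j : Fin 4, i ≠ j → ∃ μ : ℂ, ‖μ‖ = 1 ∧
      (∀ s, ε ≤ (μ * d (i, s)).re) ∧
      (∀ t, (μ * d (j, t)).re ≤ -ε ∧ -1 ≤ (μ * d (j, t)).re ∧ |(μ * d (j, t)).im| ≤ 1) := by
    intro i j hij
    rcases xy_ne i j hij with hx | hy
    · refine ⟨((x4 i : ℝ) : ℂ), ?_, ?_, ?_⟩
      · rw [Complex.norm_real]
        rcases x4_pm i with h | h <;> rw [h] <;> norm_num
      · intro s
        rw [Complex.re_ofReal_mul, hdre]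
        exact helper1 hε0 hε1 hα_def (x4_pm i) (hBre i s).1 (hBre i s).2
      · intro t
        have h2 := helper2 hε0 hε1 hα_def (x4_pm i) (x4_pm j) hx (hBre j t).1 (hBre j t).2
        refine ⟨?_, ?_, ?_⟩
        · rw [Complex.re_ofReal_mul, hdre]; exact h2.1
        · rw [Complex.re_ofReal_mul, hdre]; exact h2.2
        · rw [Complex.im_ofReal_mul, hdim, abs_mul]
          have h3 : |x4 i| = 1 := by rcases x4_pm i with h | h <;> rw [h] <;> norm_num
          rw [h3, one_mul]
          exact helper3 hε0 hε1 hα_def (y4_pm j) (hBim j t).1 (hBim j t).2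
    · refine ⟨((-(y4 i) : ℝ) : ℂ) * Complex.I, ?_, ?_, ?_⟩
      · rw [norm_mul, Complex.norm_real, Complex.norm_I, mul_one]
        rcases y4_pm i with h | h <;> rw [h] <;> norm_num
      · intro s
        have hre : ∀ z : ℂ, (((-(y4 i) : ℝ) : ℂ) * Complex.I * z).re = y4 i * z.im := by
          intro z
          simp [Complex.mul_re, Complex.mul_im, Complex.I_re, Complex.I_im]
        rw [hre, hdim]
        exact helper1 hε0 hε1 hα_def (y4_pm i) (hBim i s).1 (hBim i s).2
      · intro t
        have hre : ∀ z : ℂ, (((-(y4 i) : ℝ) : ℂ) * Complex.I * z).re = y4 i * z.im := by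
          intro z
          simp [Complex.mul_re, Complex.mul_im, Complex.I_re, Complex.I_im]
        have him : ∀ z : ℂ, (((-(y4 i) : ℝ) : ℂ) * Complex.I * z).im = -(y4 i) * z.re := by
          intro z
          simp [Complex.mul_re, Complex.mul_im, Complex.I_re, Complex.I_im]
        have h2 := helper2 hε0 hε1 hα_def (y4_pm i) (y4_pm j) hy (hBim j t).1 (hBim j t).2
        refine ⟨?_, ?_, ?_⟩
        · rw [hre, hdim]; exact h2.1
        · rw [hre, hdim]; exact h2.2
        · rw [him, hdre, abs_mul, abs_neg]
          have h3 : |y4 i| = 1 := by rcases y4_pm i with h | h <;> rw [h] <;> norm_num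
          rw [h3, one_mul]
          exact helper3 hε0 hε1 hα_def (x4_pm j) (hBre j t).1 (hBre j t).2
  -- different blocks are separated
  have hne : ∀ p q : Fin 4 × Fin m, p.1 ≠ q.1 → d p - d q ≠ 0 := by
    intro p q hpq h0
    obtain ⟨μ, hμ1, hμ2, hμ3⟩ := hsep p.1 q.1 hpq
    have h1 := hμ2 p.2
    have h2 := (hμ3 q.2).1
    have : μ * d (p.1, p.2) = μ * d (q.1, q.2) := by
      rw [show d (p.1, p.2) = d (q.1, q.2) from by
        have := sub_eq_zero.mp h0
        simpa using this]
    rw [this] at h1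
    linarith
  -- the commutator matrix
  set C' : Matrix (Fin 4 × Fin m) (Fin 4 × Fin m) ℂ := Matrix.of (fun p q =>
    if p.1 = q.1 then ((2/(1-ε) : ℝ) : ℂ) * C p.1 p.2 q.2 else A p q / (d p - d q)) with hC'
  refine ⟨d, C', hQmem, ?_, ?_⟩
  · -- the commutator equation
    ext p q
    obtain ⟨i, s⟩ := p
    obtain ⟨j, t⟩ := q
    rw [Matrix.sub_apply, Matrix.diagonal_mul, Matrix.mul_diagonal]
    by_cases hij : i = j
    · subst hij
      have hA : A (i, s) (i, t) = B i s * C i s t - C i s t * B i t := by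
        have h0 := congrFun (congrFun (congrArg (fun M => (M : Matrix (Fin m) (Fin m) ℂ)) (hcomm i)) s) t
        simpa [Matrix.sub_apply, Matrix.diagonal_mul, Matrix.mul_diagonal] using h0
      have hC'e : C' (i, s) (i, t) = ((2/(1-ε) : ℝ) : ℂ) * C i s t := by simp [hC']
      rw [hC'e, hA]
      have hd1 : d (i, s) = (α:ℂ) * B i s + c0 i := rfl
      have hd2 : d (i, t) = (α:ℂ) * B i t + c0 i := rfl
      rw [hd1, hd2]
      have hcast : (α:ℂ) * ((2/(1-ε) : ℝ) : ℂ) = 1 := by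
        have hc : (1:ℂ) - (ε:ℂ) ≠ 0 := by
          exact_mod_cast ne_of_gt hε1'
        rw [hα_def]
        push_cast
        field_simp
      linear_combination (-(C i s t * (B i s - B i t))) * hcast
    · have hC'e : C' (i, s) (j, t) = A (i, s) (j, t) / (d (i, s) - d (j, t)) := by
        simp [hC', hij]
      rw [hC'e]
      have hnz := hne (i, s) (j, t) hij
      have hswap : d (i, s) * (A (i, s) (j, t) / (d (i, s) - d (j, t)))
          - A (i, s) (j, t) / (d (i, s) - d (j, t)) * d (j, t)
          = A (i, s) (j, t) / (d (i, s) - d (j, t)) * (d (i, s) - d (j, t)) := by ring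
      rw [hswap, div_mul_cancel₀ _ hnz]
  · -- the norm bound
    simp only [opNorm_eq]
    obtain ⟨S, hS_def⟩ : ∃ S : ℝ, S = ⨆ i, ‖C i‖ := ⟨_, rfl⟩
    rw [← hS_def]
    have hbdd : BddAbove (Set.range fun i => ‖C i‖) := Set.Finite.bddAbove (Set.finite_range _)
    have hSle : ∀ i, ‖C i‖ ≤ S := fun i => hS_def ▸ le_ciSup hbdd i
    have hS0 : 0 ≤ S := le_trans (norm_nonneg (C 0)) (hSle 0)
    set M : Fin 4 → Matrix (Fin m) (Fin m) ℂ := fun i => ((2/(1-ε) : ℝ) : ℂ) • C i with hM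
    set Cd : Matrix (Fin 4 × Fin m) (Fin 4 × Fin m) ℂ := Matrix.of (fun p q : (Fin 4) × (Fin m) =>
      if p.1 = q.1 then M p.1 p.2 q.2 else 0) with hCd
    have hMn : ∀ i, ‖M i‖ ≤ 2/(1-ε) * S := by
      intro i
      rw [hM]
      rw [norm_smul, Complex.norm_real, Real.norm_eq_abs, abs_of_nonneg (by positivity)]
      have := hSle i
      have h2 : (0:ℝ) ≤ 2/(1-ε) := by positivity
      nlinarith [norm_nonneg (C i)]
    have hCdn : ‖Cd‖ ≤ 2/(1-ε) * S := blockdiag_le M _ (by positivity) hMn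
    set Xm : Fin 4 → Fin 4 → Matrix (Fin m) (Fin m) ℂ := fun i j =>
      Matrix.of (fun s t => A (i, s) (j, t) / (d (i, s) - d (j, t))) with hXm
    set E : Fin 4 → Fin 4 → Matrix (Fin 4 × Fin m) (Fin 4 × Fin m) ℂ := fun i j =>
      Matrix.of (fun p q : (Fin 4) × (Fin m) =>
        if p.1 = i ∧ q.1 = j then Xm i j p.2 q.2 else 0) with hE
    have hXn : ∀ i j, i ≠ j → ‖Xm i j‖ ≤ ‖A‖ / (2 * ε ^ 2) := by
      intro i j hij
      obtain ⟨μ, hμ1, hμ2, hμ3⟩ := hsep i j hij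
      have hμ0 : μ ≠ 0 := by
        intro h0
        rw [h0, norm_zero] at hμ1
        norm_num at hμ1
      have hXeq : Xm i j = Matrix.of (fun s t =>
          (μ • (Matrix.of fun s t => A (i, s) (j, t))) s t
            / ((fun s => μ * d (i, s)) s - (fun t => μ * d (j, t)) t)) := by
        ext s t
        simp only [hXm, Matrix.of_apply, Matrix.smul_apply, smul_eq_mul]
        rw [show μ * d (i, s) - μ * d (j, t) = μ * (d (i, s) - d (j, t)) by ring,
          mul_div_mul_left _ _ hμ0]
      rw [hXeq]
      refine le_trans (sylvester hε0 hε1 _ _ _ hμ2 hμ3) ?_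
      have hAn : ‖μ • (Matrix.of fun s t => A (i, s) (j, t))‖ ≤ ‖A‖ := by
        rw [norm_smul, hμ1, one_mul]
        exact compression_le A i j
      gcongr
    have hdecomp : C' = Cd + ∑ ij ∈ Finset.univ.offDiag, E ij.1 ij.2 := by
      ext p q
      rw [Matrix.add_apply, Matrix.sum_apply]
      by_cases h : p.1 = q.1
      · have h1 : C' p q = Cd p q := by
          simp only [hC', hCd, hM, Matrix.of_apply, if_pos h, Matrix.smul_apply, smul_eq_mul]
        have h2 : ∀ ij ∈ Finset.univ.offDiag, E ij.1 ij.2 p q = 0 := by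
          intro ij hij
          obtain ⟨-, -, hne'⟩ := Finset.mem_offDiag.mp hij
          simp only [hE, Matrix.of_apply]
          rw [if_neg]
          rintro ⟨ha, hb⟩
          exact hne' (by rw [← ha, ← hb, h])
        rw [Finset.sum_congr rfl h2, Finset.sum_const, smul_zero, add_zero, h1]
      · have hmem : (p.1, q.1) ∈ Finset.univ.offDiag :=
          Finset.mem_offDiag.mpr ⟨Finset.mem_univ _, Finset.mem_univ _, h⟩
        have h1 : Cd p q = 0 := by simp only [hCd, Matrix.of_apply, if_neg h]
        have h2 : ∑ ij ∈ Finset.univ.offDiag, E ij.1 ij.2 p q = E p.1 q.1 p q := by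
          refine Finset.sum_eq_single_of_mem _ hmem ?_
          intro b hb hbne
          simp only [hE, Matrix.of_apply]
          rw [if_neg]
          rintro ⟨ha, hb'⟩
          exact hbne (Prod.ext ha.symm hb'.symm)
        have h3 : E p.1 q.1 p q = C' p q := by
          simp only [hE, hXm, hC', Matrix.of_apply, if_pos h, if_neg h, and_self, if_true]
        rw [h1, h2, h3, zero_add]
    have hEn : ∀ ij ∈ Finset.univ.offDiag (α := Fin 4), ‖E ij.1 ij.2‖ ≤ ‖A‖ / (2 * ε ^ 2) := by
      intro ij hij
      obtain ⟨-, -, hne'⟩ := Finset.mem_offDiag.mp hij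
      exact le_trans (embed_le (Xm ij.1 ij.2) ij.1 ij.2) (hXn ij.1 ij.2 hne')
    have hcard : ((Finset.univ.offDiag (α := Fin 4)).card : ℝ) = 12 := by
      rw [Finset.offDiag_card]
      simp
    calc ‖C'‖ = ‖Cd + ∑ ij ∈ Finset.univ.offDiag, E ij.1 ij.2‖ := by rw [← hdecomp]
      _ ≤ ‖Cd‖ + ‖∑ ij ∈ Finset.univ.offDiag, E ij.1 ij.2‖ := norm_add_le _ _
      _ ≤ ‖Cd‖ + ∑ ij ∈ Finset.univ.offDiag, ‖E ij.1 ij.2‖ := by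
          gcongr
          exact norm_sum_le _ _
      _ ≤ 2/(1-ε) * S + ∑ ij ∈ Finset.univ.offDiag (α := Fin 4), ‖A‖ / (2 * ε ^ 2) :=
          add_le_add hCdn (Finset.sum_le_sum hEn)
      _ = 2/(1-ε) * S + 12 * (‖A‖ / (2 * ε ^ 2)) := by
          rw [Finset.sum_const, nsmul_eq_mul, hcard]
      _ = 2/(1-ε) * S + 6 * ‖A‖ / ε ^ 2 := by
          have hεne : ε ≠ 0 := ne_of_gt hε0
          field_simp
          ring
end

section
/- Let m ≥ 2 and let b_1, …, b_m be (not necessarily distinct) points of the square Q. Then there exist indices i ≠ j with |b_i − b_j| ≤ √(32/m). -/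
lemma cell_close (n : ℕ) (hn : 1 ≤ n) (x y : ℝ) (hx1 : -1 ≤ x) (hx2 : x ≤ 1)
    (hy1 : -1 ≤ y) (hy2 : y ≤ 1)
    (h : min (n-1) ⌊(x+1)*n/2⌋₊ = min (n-1) ⌊(y+1)*n/2⌋₊) :
    |x - y| ≤ 2 / n := by
  have hnpos : (0:ℝ) < n := by exact_mod_cast hn
  have key : ∀ z : ℝ, -1 ≤ z → z ≤ 1 →
      2 * ((min (n-1) ⌊(z+1)*n/2⌋₊ : ℕ) : ℝ) ≤ (z+1) * n ∧
      (z+1) * n ≤ 2 * (((min (n-1) ⌊(z+1)*n/2⌋₊ : ℕ) : ℝ) + 1) := by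
    intro z hz1 hz2
    have hz0 : (0:ℝ) ≤ (z+1)*n/2 := by
      have : (0:ℝ) ≤ z + 1 := by linarith
      positivity
    constructor
    · have h1 : ((min (n-1) ⌊(z+1)*n/2⌋₊ : ℕ) : ℝ) ≤ (z+1)*n/2 := by
        calc ((min (n-1) ⌊(z+1)*n/2⌋₊ : ℕ) : ℝ) ≤ (⌊(z+1)*n/2⌋₊ : ℝ) := by
              exact_mod_cast min_le_right _ _
          _ ≤ (z+1)*n/2 := Nat.floor_le hz0
      linarith
    · rcases le_or_gt ⌊(z+1)*n/2⌋₊ (n-1) with hle | hlt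
      · have hmin : min (n-1) ⌊(z+1)*n/2⌋₊ = ⌊(z+1)*n/2⌋₊ := min_eq_right hle
        rw [hmin]
        have h2 : (z+1)*n/2 < (⌊(z+1)*n/2⌋₊ : ℝ) + 1 := Nat.lt_floor_add_one _
        linarith
      · have hmin : min (n-1) ⌊(z+1)*n/2⌋₊ = n - 1 := min_eq_left hlt.le
        rw [hmin]
        have hcast : ((n-1 : ℕ) : ℝ) = (n:ℝ) - 1 := by
          have h1 : (1:ℕ) ≤ n := hn
          push_cast [Nat.cast_sub h1]
          ring
        rw [hcast]
        nlinarith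
  obtain ⟨hx3, hx4⟩ := key x hx1 hx2
  obtain ⟨hy3, hy4⟩ := key y hy1 hy2
  rw [h] at hx3 hx4
  rw [abs_sub_le_iff]
  constructor <;> rw [le_div_iff₀ hnpos] <;> nlinarith [hx3, hx4, hy3, hy4]

set_option maxHeartbeats 1000000 in
/-- Among any m ≥ 2 points of the square Q, two distinct indices are at distance at
most √(32/m). -/
theorem stmt8 (m : ℕ) (hm : 2 ≤ m) (b : Fin m → ℂ) (hb : ∀ i, b i ∈ Qsq) :
    ∃ i j : Fin m, i ≠ j ∧ ‖b i - b j‖ ≤ Real.sqrt (32 / m) := by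
  set n := Nat.sqrt (m - 1) with hn_def
  have hn1 : 1 ≤ n := by
    have : 1 ≤ m - 1 := by omega
    have := Nat.sqrt_le_sqrt this
    simpa using this
  have hs : n * n ≤ m - 1 := Nat.sqrt_le (m - 1)
  have hnm : n * n < m := by omega
  have hm4 : m ≤ 4 * (n * n) := by
    have h1 : m - 1 < (n + 1) * (n + 1) := Nat.lt_succ_sqrt (m - 1)
    have h2 : m - 1 + 1 = m := by omega
    nlinarith [hn1, h1, h2]
  -- pigeonhole
  have hcard : Fintype.card (Fin n × Fin n) < Fintype.card (Fin m) := by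
    simp [hnm]
  set f : Fin m → Fin n × Fin n := fun i =>
    (⟨min (n-1) ⌊((b i).re + 1)*n/2⌋₊, by omega⟩,
     ⟨min (n-1) ⌊((b i).im + 1)*n/2⌋₊, by omega⟩) with hf
  obtain ⟨i, j, hij, hfij⟩ := Fintype.exists_ne_map_eq_of_card_lt f hcard
  refine ⟨i, j, hij, ?_⟩
  have hre : min (n-1) ⌊((b i).re + 1)*n/2⌋₊ = min (n-1) ⌊((b j).re + 1)*n/2⌋₊ := by
    have := congrArg (Prod.fst) hfij
    simpa [hf] using congrArg Fin.val this
  have him : min (n-1) ⌊((b i).im + 1)*n/2⌋₊ = min (n-1) ⌊((b j).im + 1)*n/2⌋₊ := by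
    have := congrArg (Prod.snd) hfij
    simpa [hf] using congrArg Fin.val this
  have hbi := hb i
  have hbj := hb j
  simp only [Qsq, Set.mem_setOf_eq, abs_le] at hbi hbj
  have h1 : |(b i).re - (b j).re| ≤ 2 / n :=
    cell_close n hn1 _ _ hbi.1.1 hbi.1.2 hbj.1.1 hbj.1.2 hre
  have h2 : |(b i).im - (b j).im| ≤ 2 / n :=
    cell_close n hn1 _ _ hbi.2.1 hbi.2.2 hbj.2.1 hbj.2.2 him
  have hnpos : (0:ℝ) < n := by exact_mod_cast hn1
  have hmpos : (0:ℝ) < m := by positivity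
  rw [Real.le_sqrt (norm_nonneg _)]
  have hsq : ‖b i - b j‖ ^ 2 =
      ((b i).re - (b j).re)^2 + ((b i).im - (b j).im)^2 := by
    rw [Complex.sq_norm, Complex.normSq_apply]
    simp [Complex.sub_re, Complex.sub_im]
    ring
  rw [hsq]
  have hb1 : ((b i).re - (b j).re)^2 ≤ (2/n)^2 := by
    nlinarith [abs_nonneg ((b i).re - (b j).re), sq_abs ((b i).re - (b j).re), h1]
  have hb2 : ((b i).im - (b j).im)^2 ≤ (2/n)^2 := by
    nlinarith [abs_nonneg ((b i).im - (b j).im), sq_abs ((b i).im - (b j).im), h2]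
  have hkey : 2 * (2/(n:ℝ))^2 ≤ 32 / m := by
    have e : 2 * (2/(n:ℝ))^2 = 8 / ((n:ℝ)*n) := by
      field_simp
      ring
    rw [e, div_le_div_iff₀ (by positivity) hmpos]
    have hmn : (m : ℝ) ≤ 4 * (n * n) := by exact_mod_cast hm4
    nlinarith
  nlinarith
  positivity
end

section
/- Let m ≥ 2 and let B be any m×m diagonal complex matrix with all diagonal entries in the square Q. Then there exists an m×m complex matrix A with zero diagonal and ‖A‖ = 1 (namely a matrix unit: A has a single entry equal to 1 off the diagonal and all other entries 0) such that every m×m complex matrix C satisfying A = BC − CB has ‖C‖ ≥ √(m/32). In particular, the factor √m in the universal-diagonal commutator bound cannot be replaced by any smaller power of m. -/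
lemma coord_le_norm {m : ℕ} (y : EuclideanSpace ℂ (Fin m)) (i : Fin m) : ‖y i‖ ≤ ‖y‖ := by
  have h : ‖y i‖ ^ 2 ≤ ∑ l, ‖y l‖ ^ 2 :=
    Finset.single_le_sum (f := fun l => ‖y l‖ ^ 2) (fun _ _ => sq_nonneg _) (Finset.mem_univ i)
  calc ‖y i‖ = Real.sqrt (‖y i‖ ^ 2) := (Real.sqrt_sq (norm_nonneg _)).symm
    _ ≤ Real.sqrt (∑ l, ‖y l‖ ^ 2) := Real.sqrt_le_sqrt h
    _ = ‖y‖ := (EuclideanSpace.norm_eq y).symm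

lemma entry_le_opNorm {m : ℕ} (A : Matrix (Fin m) (Fin m) ℂ) (i j : Fin m) :
    ‖A i j‖ ≤ opNorm A := by
  set f := LinearMap.toContinuousLinearMap (Matrix.toEuclideanLin A) with hf
  have h2 : ‖A i j‖ = ‖(f (EuclideanSpace.single j (1:ℂ))) i‖ := by
    have h0 : (f (EuclideanSpace.single j (1:ℂ))) i
        = Matrix.mulVec A (Pi.single j 1) i := rfl
    rw [h0]
    have h3 : Matrix.mulVec A (Pi.single j (1:ℂ)) i = A i j * 1 := by
      rw [Matrix.mulVec_single]
      simp
    rw [h3, mul_one]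
  rw [h2]
  refine le_trans (coord_le_norm _ i) ?_
  calc ‖f (EuclideanSpace.single j (1:ℂ))‖
      ≤ ‖f‖ * ‖(EuclideanSpace.single j (1:ℂ) : EuclideanSpace ℂ (Fin m))‖ := f.le_opNorm _
    _ = ‖f‖ := by rw [EuclideanSpace.norm_single, norm_one, mul_one]
    _ = opNorm A := rfl

lemma opNorm_stdBasisMatrix {m : ℕ} (i j : Fin m) :
    opNorm (Matrix.single i j (1:ℂ)) = 1 := by
  refine le_antisymm ?_ ?_
  · refine ContinuousLinearMap.opNorm_le_bound _ zero_le_one (fun x => ?_)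
    rw [one_mul]
    have h1 : (LinearMap.toContinuousLinearMap
        (Matrix.toEuclideanLin (Matrix.single i j (1:ℂ)))) x
        = EuclideanSpace.single i (x j) := by
      have h0 : (LinearMap.toContinuousLinearMap
          (Matrix.toEuclideanLin (Matrix.single i j (1:ℂ)))) x
          = (WithLp.equiv 2 (Fin m → ℂ)).symm
            (Matrix.mulVec (Matrix.single i j (1:ℂ)) (WithLp.equiv 2 (Fin m → ℂ) x)) :=
        rfl
      rw [h0, Matrix.single_mulVec, one_mul]
      rfl
    rw [h1, EuclideanSpace.norm_single]
    exact coord_le_norm x j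
  · have := entry_le_opNorm (Matrix.single i j (1:ℂ)) i j
    rwa [Matrix.single_apply_same, norm_one] at this

/-- cell index of `x ∈ [-1,1]` in a partition of `[-1,1]` into `k` intervals -/
noncomputable def cell (k : ℕ) (x : ℝ) : ℕ := min (⌊(x + 1) * k / 2⌋.toNat) (k - 1)

lemma cell_lt {k : ℕ} (hk : 1 ≤ k) (x : ℝ) : cell k x < k := by
  unfold cell; omega

lemma cell_bounds {k : ℕ} (hk : 1 ≤ k) {x : ℝ} (h1 : -1 ≤ x) (h2 : x ≤ 1) :
    (cell k x : ℝ) ≤ (x + 1) * k / 2 ∧ (x + 1) * k / 2 ≤ cell k x + 1 := by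
  set a := (x + 1) * k / 2 with ha
  have hcd : cell k x = min (⌊a⌋.toNat) (k - 1) := by rw [ha]; rfl
  have hk0 : (0:ℝ) < k := by exact_mod_cast hk
  have ha0 : 0 ≤ a := by
    rw [ha]
    have hx0 : 0 ≤ x + 1 := by linarith
    positivity
  have hak : a ≤ k := by rw [ha]; nlinarith
  have hfl : (0:ℤ) ≤ ⌊a⌋ := Int.floor_nonneg.mpr ha0
  have hn : ((⌊a⌋.toNat : ℕ) : ℝ) = (⌊a⌋ : ℝ) := by exact_mod_cast Int.toNat_of_nonneg hfl
  by_cases hc : ⌊a⌋.toNat ≤ k - 1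
  · have hcell : cell k x = ⌊a⌋.toNat := by omega
    rw [hcell]
    constructor
    · rw [hn]; exact Int.floor_le a
    · rw [hn]
      have := Int.lt_floor_add_one a
      linarith
  · have hge : k ≤ ⌊a⌋.toNat := by omega
    have hka : (k:ℝ) ≤ a := by
      have hz : ((k:ℤ) : ℝ) ≤ ((⌊a⌋ : ℤ) : ℝ) := by
        exact_mod_cast (by omega : (k:ℤ) ≤ ⌊a⌋)
      have := Int.floor_le a
      push_cast at hz
      linarith
    have haeq : a = k := le_antisymm hak hka
    have hcell : cell k x = k - 1 := by omega
    rw [hcell, haeq]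
    have hcast : ((k - 1 : ℕ) : ℝ) = (k:ℝ) - 1 := by
      rw [Nat.cast_sub hk]; norm_num
    rw [hcast]
    constructor <;> linarith

lemma cell_eq_diff {k : ℕ} (hk : 1 ≤ k) {x y : ℝ} (hx1 : -1 ≤ x) (hx2 : x ≤ 1)
    (hy1 : -1 ≤ y) (hy2 : y ≤ 1) (h : cell k x = cell k y) : |x - y| ≤ 2 / k := by
  have hk0 : (0:ℝ) < k := by exact_mod_cast hk
  obtain ⟨hxl, hxu⟩ := cell_bounds hk hx1 hx2
  obtain ⟨hyl, hyu⟩ := cell_bounds hk hy1 hy2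
  rw [h] at hxl hxu
  rw [abs_le]
  constructor
  · rw [neg_le, neg_sub, le_div_iff₀ hk0]
    nlinarith
  · rw [le_div_iff₀ hk0]
    nlinarith

set_option maxHeartbeats 1000000 in
/-- For any m×m diagonal B with entries in Q (m ≥ 2) there is an off-diagonal matrix
unit A (zero diagonal, norm one) such that any C with A = BC − CB has ‖C‖ ≥ √(m/32). -/
theorem stmt9 (m : ℕ) (hm : 2 ≤ m) (d : Fin m → ℂ) (hd : ∀ i, d i ∈ Qsq) :
    ∃ A : Matrix (Fin m) (Fin m) ℂ,
      (∀ i, A i i = 0) ∧ opNorm A = 1 ∧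
      (∃ i j : Fin m, i ≠ j ∧ A = Matrix.single i j 1) ∧
      ∀ C : Matrix (Fin m) (Fin m) ℂ,
        A = Matrix.diagonal d * C - C * Matrix.diagonal d →
        Real.sqrt (m / 32) ≤ opNorm C := by
  set k := Nat.sqrt (m - 1) with hkdef
  have hk1 : 1 ≤ k := by
    rw [hkdef]
    exact Nat.le_sqrt.mpr (by omega)
  have hk2 : k * k ≤ m - 1 := by
    have := Nat.sqrt_le' (m - 1)
    simpa [pow_two] using this
  have hk3 : m - 1 < (k + 1) * (k + 1) := by
    have := Nat.lt_succ_sqrt' (m - 1)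
    simpa [pow_two, Nat.succ_eq_add_one] using this
  have hm3 : m ≤ (k + 1) * (k + 1) := by omega
  have hm4 : m ≤ 4 * (k * k) := by nlinarith [hm3, hk1]
  clear_value k
  have hcard : Fintype.card (Fin k × Fin k) < Fintype.card (Fin m) := by
    simp only [Fintype.card_prod, Fintype.card_fin]
    omega
  obtain ⟨i, j, hij, hfij⟩ := Fintype.exists_ne_map_eq_of_card_lt
    (fun i : Fin m => ((⟨cell k (d i).re, cell_lt hk1 _⟩ : Fin k),
      (⟨cell k (d i).im, cell_lt hk1 _⟩ : Fin k))) hcard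
  have hre : cell k (d i).re = cell k (d j).re :=
    congrArg (fun p : Fin k × Fin k => p.1.1) hfij
  have him : cell k (d i).im = cell k (d j).im :=
    congrArg (fun p : Fin k × Fin k => p.2.1) hfij
  have hdi := hd i
  have hdj := hd j
  simp only [Qsq, Set.mem_setOf_eq, abs_le] at hdi hdj
  have hdre : |(d i).re - (d j).re| ≤ 2 / k :=
    cell_eq_diff hk1 hdi.1.1 hdi.1.2 hdj.1.1 hdj.1.2 hre
  have hdim : |(d i).im - (d j).im| ≤ 2 / k :=
    cell_eq_diff hk1 hdi.2.1 hdi.2.2 hdj.2.1 hdj.2.2 him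
  refine ⟨Matrix.single i j 1, ?_, opNorm_stdBasisMatrix i j, ⟨i, j, hij, rfl⟩, ?_⟩
  · intro l
    simp only [Matrix.single, Matrix.of_apply]
    have h : ¬(i = l ∧ j = l) := by rintro ⟨rfl, rfl⟩; exact hij rfl
    simp [h]
  · intro C hC
    have hentry : (1:ℂ) = (d i - d j) * C i j := by
      have h := congrFun (congrFun hC i) j
      rw [Matrix.single_apply_same] at h
      rw [Matrix.sub_apply, Matrix.diagonal_mul, Matrix.mul_diagonal] at h
      rw [h]; ring
    set r := ‖d i - d j‖ with hr
    have hne : d i - d j ≠ 0 := by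
      intro he; rw [he, zero_mul] at hentry; exact one_ne_zero hentry
    have hrpos : 0 < r := by rw [hr]; exact norm_pos_iff.mpr hne
    have hk0 : (0:ℝ) < k := by exact_mod_cast hk1
    have hsq : r ^ 2 = ((d i).re - (d j).re) ^ 2 + ((d i).im - (d j).im) ^ 2 := by
      rw [hr, Complex.sq_norm, Complex.normSq_apply,
        Complex.sub_re, Complex.sub_im]
      ring
    have hr2 : r ^ 2 * (k:ℝ) ^ 2 ≤ 8 := by
      have h1 : ((d i).re - (d j).re) ^ 2 ≤ (2 / k) ^ 2 := by
        nlinarith [sq_abs ((d i).re - (d j).re), abs_nonneg ((d i).re - (d j).re),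
          hdre, div_nonneg (by norm_num : (0:ℝ) ≤ 2) hk0.le]
      have h2 : ((d i).im - (d j).im) ^ 2 ≤ (2 / k) ^ 2 := by
        nlinarith [sq_abs ((d i).im - (d j).im), abs_nonneg ((d i).im - (d j).im),
          hdim, div_nonneg (by norm_num : (0:ℝ) ≤ 2) hk0.le]
      have h3 : r ^ 2 ≤ 8 / (k:ℝ) ^ 2 := by
        have h4 : (2 / (k:ℝ)) ^ 2 = 4 / k ^ 2 := by rw [div_pow]; norm_num
        rw [h4] at h1 h2
        have h5 : 4 / (k:ℝ) ^ 2 + 4 / k ^ 2 = 8 / k ^ 2 := by ring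
        rw [hsq]; linarith
      calc r ^ 2 * (k:ℝ) ^ 2 ≤ (8 / (k:ℝ) ^ 2) * k ^ 2 :=
            mul_le_mul_of_nonneg_right h3 (sq_nonneg _)
        _ = 8 := by field_simp
    have hCij : 1 = r * ‖C i j‖ := by
      have := congrArg norm hentry
      rwa [norm_one, norm_mul] at this
    have hCnorm : ‖C i j‖ = 1 / r := by
      rw [eq_div_iff hrpos.ne']
      linarith [hCij]
    have hmr : (m:ℝ) ≤ 4 * (k:ℝ) ^ 2 := by
      rw [pow_two]
      exact_mod_cast hm4
    have key : (m:ℝ) / 32 ≤ (1 / r) ^ 2 := by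
      rw [div_pow, one_pow, div_le_div_iff₀ (by norm_num : (0:ℝ) < 32) (by positivity)]
      have h5 := mul_le_mul_of_nonneg_right hmr (sq_nonneg r)
      nlinarith [hr2, h5]
    calc Real.sqrt ((m:ℝ) / 32) ≤ Real.sqrt ((1 / r) ^ 2) := Real.sqrt_le_sqrt key
      _ = 1 / r := Real.sqrt_sq (by positivity)
      _ = ‖C i j‖ := hCnorm.symm
      _ ≤ opNorm C := entry_le_opNorm C i j
end

section
/- Let 0 < ε ≤ 1 and let a be a real number. Let B_1 be an m×m diagonal complex matrix with all diagonal entries in the square Q and with the real part of every diagonal entry at most a − ε, and let B_2 be an m'×m' diagonal complex matrix with all diagonal entries in Q and with the real part of every diagonal entry at least a + ε. Then for every m×m' complex matrix A there exists a unique m×m' complex matrix C such that A = B_1 C − C B_2, and this C satisfies ‖C‖ ≤ 2‖A‖/ε². -/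
open MeasureTheory Set Filter Topology

lemma aux_cexp_integrableOn {z : ℂ} (hz : z.re < 0) :
    IntegrableOn (fun t : ℝ => Complex.exp (t * z)) (Ioi 0) := by
  have hcont : Continuous fun t : ℝ => Complex.exp (t * z) :=
    Complex.continuous_exp.comp (Complex.continuous_ofReal.mul continuous_const)
  refine Integrable.mono' (g := fun t => Real.exp (-(-z.re) * t))
    (exp_neg_integrableOn_Ioi 0 (neg_pos.mpr hz)) hcont.aestronglyMeasurable ?_
  filter_upwards with t
  rw [Complex.norm_exp]
  have h1 : ((t : ℂ) * z).re = t * z.re := by simp [Complex.mul_re]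
  rw [h1]
  exact le_of_eq (congrArg Real.exp (by ring))

lemma aux_cexp_integral {z : ℂ} (hz : z.re < 0) :
    ∫ t : ℝ in Ioi 0, Complex.exp (t * z) = -z⁻¹ := by
  have hz0 : z ≠ 0 := by
    intro h; rw [h] at hz; simp at hz
  have hderiv : ∀ x ∈ Ici (0:ℝ),
      HasDerivAt (fun t : ℝ => z⁻¹ * Complex.exp (t * z)) (Complex.exp (x * z)) x := by
    intro x _
    have h1 : HasDerivAt (fun t : ℝ => (t : ℂ) * z) z x := by
      simpa using (Complex.ofRealCLM.hasDerivAt (x := x)).mul_const z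
    have h2 := (h1.cexp).const_mul z⁻¹
    have h3 : z⁻¹ * (Complex.exp (x * z) * z) = Complex.exp (x * z) := by
      field_simp
    rwa [h3] at h2
  have htend : Tendsto (fun t : ℝ => z⁻¹ * Complex.exp (t * z)) atTop (𝓝 0) := by
    have h0 : Tendsto (fun t : ℝ => Complex.exp (t * z)) atTop (𝓝 0) := by
      rw [tendsto_zero_iff_norm_tendsto_zero]
      have heq : (fun t : ℝ => ‖Complex.exp (t * z)‖) = fun t : ℝ => Real.exp (t * z.re) := by
        funext t
        rw [Complex.norm_exp]
        congr 1
        simp [Complex.mul_re]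
      rw [heq]
      exact Real.tendsto_exp_atBot.comp (tendsto_id.atTop_mul_const_of_neg hz)
    simpa using h0.const_mul z⁻¹
  have := integral_Ioi_of_hasDerivAt_of_tendsto' hderiv (aux_cexp_integrableOn hz) htend
  simpa using this

lemma aux_rexp_integral {b : ℝ} (hb : 0 < b) :
    ∫ t : ℝ in Ioi 0, Real.exp (-b * t) = 1 / b := by
  have hderiv : ∀ x ∈ Ici (0:ℝ),
      HasDerivAt (fun t : ℝ => -b⁻¹ * Real.exp (-b * t)) (Real.exp (-b * x)) x := by
    intro x _
    have h1 : HasDerivAt (fun t : ℝ => -b * t) (-b) x := by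
      simpa using (hasDerivAt_id x).const_mul (-b)
    have h2 := (h1.exp).const_mul (-b⁻¹)
    have h3 : -b⁻¹ * (Real.exp (-b * x) * -b) = Real.exp (-b * x) := by
      field_simp
    rwa [h3] at h2
  have htend : Tendsto (fun t : ℝ => -b⁻¹ * Real.exp (-b * t)) atTop (𝓝 0) := by
    have h1 : Tendsto (fun t : ℝ => -b * t) atTop atBot := by
      simpa [mul_comm] using tendsto_id.atTop_mul_const_of_neg (neg_lt_zero.mpr hb)
    have h0 : Tendsto (fun t : ℝ => Real.exp (-b * t)) atTop (𝓝 0) :=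
      Real.tendsto_exp_atBot.comp h1
    simpa using h0.const_mul (-b⁻¹)
  have hkey := integral_Ioi_of_hasDerivAt_of_tendsto' hderiv (exp_neg_integrableOn_Ioi 0 hb) htend
  rw [hkey]
  simp [Real.exp_zero, one_div]

lemma diag_norm_le {n : ℕ} {c : ℝ} (hc : 0 ≤ c) {e : Fin n → ℂ} (he : ∀ i, ‖e i‖ ≤ c)
    {v w : EuclideanSpace ℂ (Fin n)} (hw : ∀ i, w i = e i * v i) :
    ‖w‖ ≤ c * ‖v‖ := by
  calc ‖w‖
      = Real.sqrt (∑ i, ‖e i * v i‖ ^ 2) := by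
        rw [EuclideanSpace.norm_eq]
        congr 1
        exact Finset.sum_congr rfl fun i _ => by rw [hw i]
    _ ≤ Real.sqrt (c ^ 2 * ∑ i, ‖v i‖ ^ 2) := by
        apply Real.sqrt_le_sqrt
        rw [Finset.mul_sum]
        refine Finset.sum_le_sum fun i _ => ?_
        rw [norm_mul, mul_pow]
        gcongr
        exact he i
    _ = c * Real.sqrt (∑ i, ‖v i‖ ^ 2) := by
        rw [Real.sqrt_mul (by positivity), Real.sqrt_sq hc]
    _ = c * ‖v‖ := by rw [EuclideanSpace.norm_eq]

set_option maxHeartbeats 1000000 in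
set_option synthInstance.maxHeartbeats 400000 in
/-- If the diagonal entries of B₁ lie in Q with real part ≤ a − ε and those of B₂ lie in
Q with real part ≥ a + ε (0 < ε ≤ 1), then for every A the equation A = B₁C − CB₂ has a
unique solution C, and it satisfies ‖C‖ ≤ 2‖A‖/ε². -/
theorem stmt13 (ε : ℝ) (hε0 : 0 < ε) (hε1 : ε ≤ 1) (a : ℝ) (m m' : ℕ)
    (d₁ : Fin m → ℂ) (hd₁ : ∀ i, d₁ i ∈ Qsq) (hd₁' : ∀ i, (d₁ i).re ≤ a - ε)
    (d₂ : Fin m' → ℂ) (hd₂ : ∀ j, d₂ j ∈ Qsq) (hd₂' : ∀ j, a + ε ≤ (d₂ j).re)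
    (A : Matrix (Fin m) (Fin m') ℂ) :
    ∃ C : Matrix (Fin m) (Fin m') ℂ,
      (A = Matrix.diagonal d₁ * C - C * Matrix.diagonal d₂ ∧
        opNorm C ≤ 2 * opNorm A / ε ^ 2) ∧
      ∀ C' : Matrix (Fin m) (Fin m') ℂ,
        A = Matrix.diagonal d₁ * C' - C' * Matrix.diagonal d₂ → C' = C := by
  classical
  have hzre : ∀ i j, (d₁ i - d₂ j).re ≤ -(2 * ε) := by
    intro i j
    have h1 := hd₁' i
    have h2 := hd₂' j
    rw [Complex.sub_re]
    linarith
  have hzre' : ∀ i j, (d₁ i - d₂ j).re < 0 := fun i j =>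
    lt_of_le_of_lt (hzre i j) (by linarith)
  have hz0 : ∀ i j, d₁ i - d₂ j ≠ 0 := by
    intro i j h
    have := hzre' i j
    rw [h] at this
    simp at this
  refine ⟨Matrix.of fun i j => A i j * (d₁ i - d₂ j)⁻¹, ⟨?_, ?_⟩, ?_⟩
  · -- the equation
    ext i j
    simp only [Matrix.sub_apply, Matrix.diagonal_mul, Matrix.mul_diagonal, Matrix.of_apply]
    field_simp [hz0 i j]
  · -- the norm bound
    set Lq : Matrix (Fin m) (Fin m') ℂ ≃ₗ[ℂ]
        (EuclideanSpace ℂ (Fin m') →L[ℂ] EuclideanSpace ℂ (Fin m)) :=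
      Matrix.toEuclideanLin.trans LinearMap.toContinuousLinearMap with hLq
    have hopN : ∀ M : Matrix (Fin m) (Fin m') ℂ, opNorm M = ‖Lq M‖ := fun _ => rfl
    have happly : ∀ (M : Matrix (Fin m) (Fin m') ℂ) (u : EuclideanSpace ℂ (Fin m'))
        (i : Fin m), (Lq M) u i = ∑ j, M i j * u j := fun _ _ _ => rfl
    set F : ℝ → Matrix (Fin m) (Fin m') ℂ :=
      fun t => fun i j => Complex.exp ((t : ℂ) * (d₁ i - d₂ j)) * A i j with hF
    have hGcont : Continuous fun t => Lq (F t) := by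
      have h1 : Continuous F := continuous_matrix fun i j =>
        (Complex.continuous_exp.comp (Complex.continuous_ofReal.mul continuous_const)).mul
          continuous_const
      exact (LinearMap.continuous_of_finiteDimensional Lq.toLinearMap).comp h1
    have hGbound : ∀ t ∈ Ioi (0:ℝ), ‖Lq (F t)‖ ≤ Real.exp (-(2*ε) * t) * ‖Lq A‖ := by
      intro t ht
      have ht0 : (0:ℝ) ≤ t := le_of_lt ht
      have hexpb : ∀ c : ℂ, c.re ≤ -ε → ‖Complex.exp ((t:ℂ) * c)‖ ≤ Real.exp (-(ε*t)) := by
        intro c hc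
        rw [Complex.norm_exp]
        apply Real.exp_le_exp.mpr
        have h2 : ((t:ℂ) * c).re = t * c.re := by simp [Complex.mul_re]
        rw [h2]
        nlinarith
      apply ContinuousLinearMap.opNorm_le_bound _ (by positivity)
      intro v
      set w : EuclideanSpace ℂ (Fin m') :=
        WithLp.toLp 2 (fun j => Complex.exp ((t:ℂ) * ((a:ℂ) - d₂ j)) * v j) with hwdef
      have hw : ∀ j, w j = Complex.exp ((t:ℂ) * ((a:ℂ) - d₂ j)) * v j := fun _ => rfl
      have hGv : ∀ i, (Lq (F t)) v i
          = Complex.exp ((t:ℂ) * (d₁ i - (a:ℂ))) * ((Lq A) w i) := by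
        intro i
        rw [happly, happly, Finset.mul_sum]
        refine Finset.sum_congr rfl fun j _ => ?_
        rw [hw j]
        simp only [hF]
        have hsplit : (t:ℂ) * (d₁ i - d₂ j)
            = (t:ℂ) * (d₁ i - (a:ℂ)) + (t:ℂ) * ((a:ℂ) - d₂ j) := by ring
        rw [hsplit, Complex.exp_add]
        ring
      have h1 : ‖(Lq (F t)) v‖ ≤ Real.exp (-(ε*t)) * ‖(Lq A) w‖ :=
        diag_norm_le (Real.exp_nonneg _)
          (fun i => hexpb (d₁ i - (a:ℂ))
            (by rw [Complex.sub_re, Complex.ofReal_re]; linarith [hd₁' i])) hGv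
      have h2 : ‖w‖ ≤ Real.exp (-(ε*t)) * ‖v‖ :=
        diag_norm_le (Real.exp_nonneg _)
          (fun j => hexpb ((a:ℂ) - d₂ j)
            (by rw [Complex.sub_re, Complex.ofReal_re]; linarith [hd₂' j])) hw
      have hexp2 : Real.exp (-(ε*t)) * Real.exp (-(ε*t)) = Real.exp (-(2*ε)*t) := by
        rw [← Real.exp_add]; ring_nf
      calc ‖(Lq (F t)) v‖ ≤ Real.exp (-(ε*t)) * ‖(Lq A) w‖ := h1
        _ ≤ Real.exp (-(ε*t)) * (‖Lq A‖ * ‖w‖) := by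
            gcongr
            exact (Lq A).le_opNorm w
        _ ≤ Real.exp (-(ε*t)) * (‖Lq A‖ * (Real.exp (-(ε*t)) * ‖v‖)) := by gcongr
        _ = Real.exp (-(2*ε)*t) * ‖Lq A‖ * ‖v‖ := by rw [← hexp2]; ring
    have hdom : IntegrableOn (fun t => Real.exp (-(2*ε)*t) * ‖Lq A‖) (Ioi (0:ℝ)) :=
      (exp_neg_integrableOn_Ioi 0 (by linarith)).mul_const _
    have hGint : IntegrableOn (fun t => Lq (F t)) (Ioi (0:ℝ)) := by
      refine Integrable.mono' hdom hGcont.aestronglyMeasurable ?_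
      filter_upwards [ae_restrict_mem measurableSet_Ioi] with t ht using hGbound t ht
    have hkey : Lq (Matrix.of fun i j => A i j * (d₁ i - d₂ j)⁻¹)
        = -∫ t in Ioi 0, Lq (F t) := by
      apply ContinuousLinearMap.ext
      intro v
      ext i
      have hvint : Integrable (fun t => (Lq (F t)) v) (volume.restrict (Ioi 0)) :=
        (ContinuousLinearMap.apply ℂ (EuclideanSpace ℂ (Fin m)) v).integrable_comp hGint
      have e2 : (∫ t in Ioi 0, Lq (F t)) v = ∫ t in Ioi 0, (Lq (F t)) v :=
        ContinuousLinearMap.integral_apply hGint v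
      have e3 : (∫ t in Ioi 0, (Lq (F t)) v) i = ∫ t in Ioi 0, ((Lq (F t)) v) i :=
        ((EuclideanSpace.proj (𝕜 := ℂ) i).integral_comp_comm hvint).symm
      have e4 : ∀ t : ℝ, ((Lq (F t)) v) i
          = ∑ j, Complex.exp ((t:ℂ) * (d₁ i - d₂ j)) • (A i j * v j) := by
        intro t
        rw [happly]
        refine Finset.sum_congr rfl fun j _ => ?_
        simp only [hF, smul_eq_mul]
        ring
      have e5 : (∫ t in Ioi 0, ((Lq (F t)) v) i)
          = ∑ j, (-(d₁ i - d₂ j)⁻¹) • (A i j * v j) := by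
        rw [integral_congr_ae (Filter.Eventually.of_forall fun t => e4 t)]
        rw [integral_finset_sum _ fun j _ =>
          ((aux_cexp_integrableOn (hzre' i j)).smul_const _)]
        exact Finset.sum_congr rfl fun j _ => by
          rw [integral_smul_const, aux_cexp_integral (hzre' i j)]
      have eR : ((-∫ t in Ioi 0, Lq (F t)) v) i = -(∫ t in Ioi 0, ((Lq (F t)) v) i) := by
        rw [ContinuousLinearMap.neg_apply, e2, ← e3]
        rfl
      rw [eR, e5, happly]
      rw [← Finset.sum_neg_distrib]
      refine Finset.sum_congr rfl fun j _ => ?_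
      rw [Matrix.of_apply, smul_eq_mul]
      field_simp
    rw [hopN, hopN, hkey, norm_neg]
    have h4 : ‖∫ t in Ioi 0, Lq (F t)‖ ≤ ∫ t in Ioi 0, Real.exp (-(2*ε)*t) * ‖Lq A‖ := by
      apply norm_integral_le_of_norm_le hdom
      filter_upwards [ae_restrict_mem measurableSet_Ioi] with t ht using hGbound t ht
    have h5 : ∫ t in Ioi 0, Real.exp (-(2*ε)*t) * ‖Lq A‖ = 1/(2*ε) * ‖Lq A‖ := by
      rw [MeasureTheory.integral_mul_const, aux_rexp_integral (by linarith : (0:ℝ) < 2*ε)]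
    have h6 : 1/(2*ε) * ‖Lq A‖ ≤ 2 * ‖Lq A‖ / ε^2 := by
      rw [div_mul_eq_mul_div, div_le_div_iff₀ (by positivity) (by positivity)]
      nlinarith [norm_nonneg (Lq A), hε0, hε1,
        mul_le_mul_of_nonneg_left hε1 (mul_nonneg (norm_nonneg (Lq A)) hε0.le),
        mul_nonneg (norm_nonneg (Lq A)) hε0.le]
    linarith [h4, h5, h6]
  · -- uniqueness
    intro C' hC'
    ext i j
    have h : A i j = (Matrix.diagonal d₁ * C' - C' * Matrix.diagonal d₂) i j := by rw [← hC']
    simp only [Matrix.sub_apply, Matrix.diagonal_mul, Matrix.mul_diagonal] at h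
    rw [Matrix.of_apply, h]
    field_simp [hz0 i j]
end
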